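/- arXiv:2208.07052 — 2 statements merged into one kernel-verified Lean document; each statement's English description precedes it below -/
import Mathlib

section
/- Fix T ∈ (0,∞), β ∈ (1,2], and constants A > 0, α_0 > 0. Assume 0 ≤ a_{i,j} = a_{j,i} ≤ A(i+j), 0 ≤ p_{i,j} = p_{j,i} ≤ 1, and N_{i,j}^s = N_{j,i}^s ≥ 0 with ∑_{s=1}^{i+j−1} s N_{i,j}^s = i+j and N_{i,j}^s ≤ α_0. Let w = (w_i)_{i≥1} be a classical solution of the discrete coagulation equations with collisional breakage on [0,T] with nonnegative components, with sup_{t∈[0,T]} ∑_{i≥1} i² w_i(t) < ∞ and finite first moment. Then the total mass is conserved: ∑_{i=1}^{∞} i w_i(t) = ∑_{i=1}^{∞} i w_i(0) for all t ∈ [0,T]. -/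
/-- The coagulation part of the right-hand side of the discrete coagulation
equations with collisional breakage for clusters of size `i`:
`(1/2) ∑_{j=1}^{i−1} p_{j,i−j} a_{j,i−j} wⱼ w_{i−j}`. -/
noncomputable def coagGain (a p : ℕ → ℕ → ℝ) (i : ℕ) (w : ℕ → ℝ) : ℝ :=
  (1/2) * ∑ j ∈ Finset.Icc 1 (i-1), p j (i-j) * a j (i-j) * w j * w (i-j)

/-- The loss term `∑_{j=1}^∞ a_{i,j} wᵢ wⱼ` (the sum over `j ≥ 1` written as a
sum over `j : ℕ` via the shift `j ↦ j + 1`). -/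
noncomputable def coagLoss (a : ℕ → ℕ → ℝ) (i : ℕ) (w : ℕ → ℝ) : ℝ :=
  ∑' j : ℕ, a i (j+1) * w i * w (j+1)

/-- The summand of the breakage gain term: for `m : ℕ` (encoding `j = i + 1 + m`),
`∑_{k=1}^{j−1} N_{j−k,k}^i (1 − p_{j−k,k}) a_{j−k,k} w_{j−k} w_k`. -/
noncomputable def breakGainTerm (a p : ℕ → ℕ → ℝ) (N : ℕ → ℕ → ℕ → ℝ) (i m : ℕ)
    (w : ℕ → ℝ) : ℝ :=
  ∑ k ∈ Finset.Icc 1 (i+m),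
    N (i+1+m-k) k i * (1 - p (i+1+m-k) k) * a (i+1+m-k) k * w (i+1+m-k) * w k

/-- The breakage gain term
`(1/2) ∑_{j=i+1}^∞ ∑_{k=1}^{j−1} N_{j−k,k}^i (1 − p_{j−k,k}) a_{j−k,k} w_{j−k} w_k`
(the sum over `j ≥ i + 1` written as a sum over `m : ℕ` via `j = i + 1 + m`). -/
noncomputable def breakGain (a p : ℕ → ℕ → ℝ) (N : ℕ → ℕ → ℕ → ℝ) (i : ℕ)
    (w : ℕ → ℝ) : ℝ :=
  (1/2) * ∑' m : ℕ, breakGainTerm a p N i m w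

/-- The full right-hand side of the discrete coagulation equations with
collisional breakage for clusters of size `i`. -/
noncomputable def coagRHS (a p : ℕ → ℕ → ℝ) (N : ℕ → ℕ → ℕ → ℝ) (i : ℕ)
    (w : ℕ → ℝ) : ℝ :=
  coagGain a p i w - coagLoss a i w + breakGain a p N i w

/-- `w` is a classical solution of the discrete coagulation equations with
collisional breakage on `[0, T]`: each `wᵢ` (for `i ≥ 1`) is a nonnegative
continuously differentiable function on `[0, T]`, all the series involved in
the right-hand side converge, and the equations hold on `[0, T]`. -/
def IsCoagBreakSol (a p : ℕ → ℕ → ℝ) (N : ℕ → ℕ → ℕ → ℝ) (T : ℝ)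
    (w : ℕ → ℝ → ℝ) : Prop :=
  (∀ i, 1 ≤ i → ContDiffOn ℝ 1 (w i) (Set.Icc 0 T)) ∧
  (∀ i, 1 ≤ i → ∀ t ∈ Set.Icc (0:ℝ) T, 0 ≤ w i t) ∧
  (∀ i, 1 ≤ i → ∀ t ∈ Set.Icc (0:ℝ) T,
    Summable (fun j : ℕ => a i (j+1) * w i t * w (j+1) t) ∧
    Summable (fun m : ℕ => breakGainTerm a p N i m (fun j => w j t)) ∧
    HasDerivWithinAt (w i) (coagRHS a p N i (fun j => w j t)) (Set.Icc 0 T) t)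

noncomputable def pairF (u : ℕ → ℝ) : ℕ × ℕ → ℝ :=
  fun x => (((x.1+1 : ℕ) : ℝ) + ((x.2+1 : ℕ) : ℝ))^2 * u (x.1+1) * u (x.2+1)

noncomputable def gamF (a p : ℕ → ℕ → ℝ) (u : ℕ → ℝ) (n : ℕ) : ℕ × ℕ → ℝ :=
  fun x => if x.1 + x.2 + 2 ≤ n then
    (1/2) * (((x.1+1 : ℕ) : ℝ) + ((x.2+1 : ℕ) : ℝ)) *
      (p (x.1+1) (x.2+1) * a (x.1+1) (x.2+1) * u (x.1+1) * u (x.2+1))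
  else 0

noncomputable def losF (a : ℕ → ℕ → ℝ) (u : ℕ → ℝ) (n : ℕ) : ℕ × ℕ → ℝ :=
  fun x => if x.1 + 1 ≤ n then
    ((x.1+1 : ℕ) : ℝ) * (a (x.1+1) (x.2+1) * u (x.1+1) * u (x.2+1))
  else 0

noncomputable def brkF (a p : ℕ → ℕ → ℝ) (N : ℕ → ℕ → ℕ → ℝ) (u : ℕ → ℝ) (n : ℕ) :
    ℕ × ℕ → ℝ :=
  fun x => (1/2) * (∑ s ∈ Finset.Icc 1 (min n (x.1+x.2+1)), (s : ℝ) * N (x.1+1) (x.2+1) s) *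
    ((1 - p (x.1+1) (x.2+1)) * a (x.1+1) (x.2+1) * u (x.1+1) * u (x.2+1))

noncomputable def psiF (a p : ℕ → ℕ → ℝ) (N : ℕ → ℕ → ℕ → ℝ) (u : ℕ → ℝ) (i : ℕ) :
    ℕ × ℕ → ℝ :=
  fun y => if y.2 + 1 ≤ i + y.1 then
    N (i + y.1 - y.2) (y.2+1) i *
      ((1 - p (i + y.1 - y.2) (y.2+1)) * a (i + y.1 - y.2) (y.2+1) * u (i + y.1 - y.2) * u (y.2+1))
  else 0

noncomputable def phiF (a p : ℕ → ℕ → ℝ) (N : ℕ → ℕ → ℕ → ℝ) (u : ℕ → ℝ) (i : ℕ) :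
    ℕ × ℕ → ℝ :=
  fun x => if i + 1 ≤ x.1 + x.2 + 2 then
    N (x.1+1) (x.2+1) i *
      ((1 - p (x.1+1) (x.2+1)) * a (x.1+1) (x.2+1) * u (x.1+1) * u (x.2+1))
  else 0
lemma gain_eq (a p : ℕ → ℕ → ℝ) (u : ℕ → ℝ) (n : ℕ) :
    ∑ i ∈ Finset.Icc 1 n, (i : ℝ) * coagGain a p i u = ∑' x : ℕ × ℕ, gamF a p u n x := by
  have hsub : Finset.Icc 1 n ⊆ Finset.range (n+1) := by
    intro i hi; simp only [Finset.mem_Icc] at hi; simp only [Finset.mem_range]; omega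
  have h1 : ∑ i ∈ Finset.Icc 1 n, (i : ℝ) * coagGain a p i u
      = ∑ z ∈ Finset.range (n+1) ×ˢ Finset.range (n+1),
          (if 1 ≤ z.2 ∧ z.2 + 1 ≤ z.1 then
            (1/2) * (z.1 : ℝ) * (p z.2 (z.1-z.2) * a z.2 (z.1-z.2) * u z.2 * u (z.1-z.2))
          else 0) := by
    rw [Finset.sum_product]
    refine (Finset.sum_subset hsub ?_).symm.trans ?_ |>.symm
    · intro i hi hni
      simp only [Finset.mem_range] at hi
      simp only [Finset.mem_Icc] at hni
      have hi0 : i = 0 := by omega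
      subst hi0
      refine Finset.sum_eq_zero fun j hj => ?_
      rw [if_neg]; omega
    · refine Finset.sum_congr rfl fun i hi => ?_
      rw [Finset.mem_Icc] at hi
      rw [Finset.sum_ite, Finset.sum_const_zero, add_zero]
      have hfe : (Finset.range (n+1)).filter (fun j => 1 ≤ j ∧ j + 1 ≤ i)
          = Finset.Icc 1 (i-1) := by
        ext j; simp only [Finset.mem_filter, Finset.mem_range, Finset.mem_Icc]; omega
      rw [hfe, coagGain, Finset.mul_sum, Finset.mul_sum]
      exact (Finset.sum_congr rfl fun j hj => by ring).symm
  have h2 : ∑' x : ℕ × ℕ, gamF a p u n x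
      = ∑ x ∈ (Finset.range n ×ˢ Finset.range n).filter (fun x => x.1 + x.2 + 2 ≤ n),
          gamF a p u n x := by
    refine tsum_eq_sum fun x hx => ?_
    simp only [Finset.mem_filter, Finset.mem_product, Finset.mem_range, not_and] at hx
    rw [gamF, if_neg]
    omega
  rw [h1, h2, Finset.sum_ite, Finset.sum_const_zero, add_zero]
  refine Finset.sum_nbij' (fun z => (z.2 - 1, z.1 - z.2 - 1)) (fun x => (x.1+x.2+2, x.1+1))
    ?_ ?_ ?_ ?_ ?_
  · intro z hz
    simp only [Finset.mem_filter, Finset.mem_product, Finset.mem_range] at hz ⊢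
    omega
  · intro x hx
    simp only [Finset.mem_filter, Finset.mem_product, Finset.mem_range] at hx ⊢
    omega
  · intro z hz
    simp only [Finset.mem_filter, Finset.mem_product, Finset.mem_range] at hz
    obtain ⟨z1, z2⟩ := z
    simp only [Prod.mk.injEq]
    omega
  · intro x hx
    simp only [Finset.mem_filter, Finset.mem_product, Finset.mem_range] at hx
    obtain ⟨x1, x2⟩ := x
    simp only [Prod.mk.injEq]
    omega
  · intro z hz
    simp only [Finset.mem_filter, Finset.mem_product, Finset.mem_range] at hz
    obtain ⟨z1, z2⟩ := z
    rw [gamF]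
    dsimp only
    rw [if_pos (by omega)]
    have e1 : z2 - 1 + 1 = z2 := by omega
    have e2 : z1 - z2 - 1 + 1 = z1 - z2 := by omega
    rw [e1, e2]
    have e3 : (((z2 : ℕ) : ℝ) + ((z1 - z2 : ℕ) : ℝ)) = (z1 : ℝ) := by
      rw [Nat.cast_sub (by omega : z2 ≤ z1)]; ring
    rw [e3]
lemma loss_eq (a : ℕ → ℕ → ℝ) (u : ℕ → ℝ) (n : ℕ) (hsum : Summable (losF a u n)) :
    ∑ i ∈ Finset.Icc 1 n, (i : ℝ) * coagLoss a i u = ∑' x : ℕ × ℕ, losF a u n x := by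
  rw [Summable.tsum_prod' hsum (fun b => hsum.prod_factor b)]
  have h1 : ∀ b : ℕ, ∑' k : ℕ, losF a u n (b, k)
      = if b + 1 ≤ n then ((b+1 : ℕ) : ℝ) * coagLoss a (b+1) u else 0 := by
    intro b
    by_cases hb : b + 1 ≤ n
    · rw [if_pos hb, coagLoss, ← tsum_mul_left]
      refine tsum_congr fun k => ?_
      rw [losF]
      dsimp only
      rw [if_pos hb]
    · rw [if_neg hb]
      have hz : ∀ k : ℕ, losF a u n (b, k) = 0 := fun k => by simp [losF, hb]
      simp [hz]
  rw [tsum_congr h1]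
  rw [tsum_eq_sum (s := Finset.range n) (fun b hb => by
    rw [if_neg]; simp only [Finset.mem_range] at hb; omega)]
  refine (Finset.sum_nbij' (fun i => i - 1) (fun b => b + 1) ?_ ?_ ?_ ?_ ?_)
  · intro i hi; simp only [Finset.mem_Icc] at hi; simp only [Finset.mem_range]; omega
  · intro b hb; simp only [Finset.mem_range] at hb; simp only [Finset.mem_Icc]; omega
  · intro i hi; simp only [Finset.mem_Icc] at hi; omega
  · intro b hb; omega
  · intro i hi
    simp only [Finset.mem_Icc] at hi
    have e1 : i - 1 + 1 = i := by omega
    rw [e1, if_pos (by omega)]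
section Break
variable (a p : ℕ → ℕ → ℝ) (N : ℕ → ℕ → ℕ → ℝ) (u : ℕ → ℝ) (i : ℕ)

lemma bgt_eq (m : ℕ) : breakGainTerm a p N i m u = ∑' k : ℕ, psiF a p N u i (m, k) := by
  rw [tsum_eq_sum (s := Finset.range (i+m)) (fun k hk => by
    simp only [Finset.mem_range] at hk
    simp only [psiF]
    rw [if_neg (by omega)])]
  rw [breakGainTerm]
  refine Finset.sum_nbij' (fun k => k - 1) (fun k => k + 1) ?_ ?_ ?_ ?_ ?_
  · intro k hk; simp only [Finset.mem_Icc] at hk; simp only [Finset.mem_range]; omega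
  · intro k hk; simp only [Finset.mem_range] at hk; simp only [Finset.mem_Icc]; omega
  · intro k hk; simp only [Finset.mem_Icc] at hk; omega
  · intro k hk; omega
  · intro k hk
    simp only [Finset.mem_Icc] at hk
    simp only [psiF]
    have e1 : k - 1 + 1 = k := by omega
    have e2 : i + (k - 1) = i + k - 1 := by omega
    rw [if_pos (by omega), e1]
    have e3 : i + m - (k - 1) = i + 1 + m - k := by omega
    rw [e3]
    ring

lemma psi_summable (hbk : Summable (fun m : ℕ => breakGainTerm a p N i m u))
    (hpsi_nonneg : 0 ≤ psiF a p N u i) : Summable (psiF a p N u i) := by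
  rw [summable_prod_of_nonneg hpsi_nonneg]
  constructor
  · intro m
    refine summable_of_ne_finset_zero (s := Finset.range (i+m)) fun k hk => ?_
    simp only [Finset.mem_range] at hk
    simp only [psiF]
    rw [if_neg (by omega)]
  · exact hbk.congr fun m => (bgt_eq a p N u i m)

lemma psi_phi (hi : 1 ≤ i) : ∑' y : ℕ × ℕ, psiF a p N u i y = ∑' x : ℕ × ℕ, phiF a p N u i x := by
  refine tsum_eq_tsum_of_ne_zero_bij (fun x => ((x : ℕ × ℕ).1 + (x : ℕ × ℕ).2 + 1 - i, (x : ℕ × ℕ).2)) ?_ ?_ ?_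
  · rintro ⟨⟨x1, x2⟩, hx⟩ ⟨⟨y1, y2⟩, hy⟩ hxy
    simp only [Function.mem_support, phiF] at hx hy
    have hx' : i + 1 ≤ x1 + x2 + 2 := by by_contra h; rw [if_neg (by simpa using h)] at hx; exact hx rfl
    have hy' : i + 1 ≤ y1 + y2 + 2 := by by_contra h; rw [if_neg (by simpa using h)] at hy; exact hy rfl
    simp only [Prod.mk.injEq, Subtype.mk.injEq] at hxy ⊢
    omega
  · rintro ⟨m, k⟩ hmk
    simp only [Function.mem_support, psiF] at hmk
    have hc : k + 1 ≤ i + m := by by_contra h; rw [if_neg (by simpa using h)] at hmk; exact hmk rfl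
    have hval : phiF a p N u i (i + m - k - 1, k) ≠ 0 := by
      simp only [phiF]
      rw [if_pos (by omega)]
      have e1 : i + m - k - 1 + 1 = i + m - k := by omega
      rw [e1]
      rw [if_pos hc] at hmk
      exact hmk
    refine ⟨⟨(i + m - k - 1, k), hval⟩, ?_⟩
    simp only [Prod.mk.injEq]
    exact ⟨by omega, trivial⟩
  · rintro ⟨⟨x1, x2⟩, hx⟩
    simp only [Function.mem_support, phiF] at hx
    have hx' : i + 1 ≤ x1 + x2 + 2 := by by_contra h; rw [if_neg (by simpa using h)] at hx; exact hx rfl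
    simp only [psiF, phiF]
    rw [if_pos (by omega), if_pos (by omega)]
    have e1 : i + (x1 + x2 + 1 - i) - x2 = x1 + 1 := by omega
    rw [e1]

end Break

lemma quad_bound {nn pp aa u1 u2 S al A : ℝ} (h1 : 0 ≤ nn) (h2 : nn ≤ al) (h3 : 0 ≤ pp)
    (h4 : pp ≤ 1) (h5 : 0 ≤ aa) (h6 : aa ≤ A * S) (h7 : 0 ≤ u1) (h8 : 0 ≤ u2) (h9 : 1 ≤ S)
    (hA : 0 ≤ A) :
    nn * ((1 - pp) * aa * u1 * u2) ≤ al * A * (S^2 * u1 * u2) := by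
  have hal : 0 ≤ al := le_trans h1 h2
  have hS : S ≤ S^2 := by nlinarith
  have c1 : (1 - pp) * aa * u1 * u2 ≤ aa * u1 * u2 := by
    nlinarith [mul_nonneg (mul_nonneg h5 h7) h8]
  have c2 : aa * u1 * u2 ≤ A * S * u1 * u2 := by nlinarith [mul_nonneg h7 h8]
  have c3 : A * S * u1 * u2 ≤ A * S^2 * u1 * u2 := by
    nlinarith [mul_nonneg (mul_nonneg (mul_nonneg hA h7) h8) (by nlinarith : (0:ℝ) ≤ S^2 - S)]
  have c0 : 0 ≤ (1 - pp) * aa * u1 * u2 := by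
    have := mul_nonneg (mul_nonneg (mul_nonneg (by linarith : (0:ℝ) ≤ 1 - pp) h5) h7) h8
    linarith
  calc nn * ((1 - pp) * aa * u1 * u2) ≤ al * ((1 - pp) * aa * u1 * u2) :=
        mul_le_mul_of_nonneg_right h2 c0
    _ ≤ al * (A * S^2 * u1 * u2) := by
        refine mul_le_mul_of_nonneg_left ?_ hal
        calc (1 - pp) * aa * u1 * u2 ≤ aa * u1 * u2 := c1
          _ ≤ A * S * u1 * u2 := c2
          _ ≤ A * S^2 * u1 * u2 := c3
    _ = al * A * (S^2 * u1 * u2) := by ring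

lemma cast_ge_two (x : ℕ × ℕ) : (1:ℝ) ≤ ((x.1+1 : ℕ) : ℝ) + ((x.2+1 : ℕ) : ℝ) := by
  push_cast
  have := Nat.cast_nonneg (α := ℝ) x.1
  have := Nat.cast_nonneg (α := ℝ) x.2
  linarith

lemma pairF_nonneg {u : ℕ → ℝ} (hu : ∀ j, 0 ≤ u (j+1)) (x : ℕ × ℕ) : 0 ≤ pairF u x :=
  mul_nonneg (mul_nonneg (sq_nonneg _) (hu x.1)) (hu x.2)

section Break2
variable {A al : ℝ} (a p : ℕ → ℕ → ℝ) (N : ℕ → ℕ → ℕ → ℝ) (u : ℕ → ℝ)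

lemma phi_le (hA : 0 ≤ A) (hal : 0 ≤ al)
    (ha_nonneg : ∀ i j, 0 ≤ a i j)
    (ha_bound : ∀ i j, 1 ≤ i → 1 ≤ j → a i j ≤ A * ((i : ℝ) + (j : ℝ)))
    (hp_nonneg : ∀ i j, 0 ≤ p i j) (hp_le : ∀ i j, p i j ≤ 1)
    (hN_nonneg : ∀ i j s, 0 ≤ N i j s)
    (hN_bound : ∀ i j s, 1 ≤ i → 1 ≤ j → s ∈ Finset.Icc 1 (i+j-1) → N i j s ≤ al)
    (hu : ∀ j, 0 ≤ u (j+1)) (i : ℕ) (hi : 1 ≤ i) (x : ℕ × ℕ) :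
    phiF a p N u i x ≤ al * A * pairF u x := by
  simp only [phiF]
  split_ifs with h
  · have hmem : i ∈ Finset.Icc 1 ((x.1+1) + (x.2+1) - 1) := by
      simp only [Finset.mem_Icc]; omega
    have hNle := hN_bound (x.1+1) (x.2+1) i (by omega) (by omega) hmem
    rw [pairF]
    exact quad_bound (hN_nonneg _ _ _) hNle (hp_nonneg _ _) (hp_le _ _) (ha_nonneg _ _)
      (ha_bound (x.1+1) (x.2+1) (by omega) (by omega)) (hu x.1) (hu x.2) (cast_ge_two x) hA
  · exact mul_nonneg (mul_nonneg hal hA) (pairF_nonneg hu x)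

lemma phi_nonneg (ha_nonneg : ∀ i j, 0 ≤ a i j)
    (hp_le : ∀ i j, p i j ≤ 1) (hN_nonneg : ∀ i j s, 0 ≤ N i j s)
    (hu : ∀ j, 0 ≤ u (j+1)) (i : ℕ) : 0 ≤ phiF a p N u i := by
  intro x
  simp only [Pi.zero_apply, phiF]
  split_ifs with h
  · exact mul_nonneg (hN_nonneg _ _ _) (mul_nonneg (mul_nonneg (mul_nonneg
      (by linarith [hp_le (x.1+1) (x.2+1)]) (ha_nonneg _ _)) (hu x.1)) (hu x.2))
  · exact le_refl _

lemma psi_nonneg (ha_nonneg : ∀ i j, 0 ≤ a i j)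
    (hp_le : ∀ i j, p i j ≤ 1) (hN_nonneg : ∀ i j s, 0 ≤ N i j s)
    (hu : ∀ j, 0 ≤ u (j+1)) (i : ℕ) : 0 ≤ psiF a p N u i := by
  intro y
  simp only [Pi.zero_apply, psiF]
  split_ifs with h
  · have e1 : i + y.1 - y.2 = (i + y.1 - y.2 - 1) + 1 := by omega
    rw [e1]
    exact mul_nonneg (hN_nonneg _ _ _) (mul_nonneg (mul_nonneg (mul_nonneg
      (by linarith [hp_le ((i + y.1 - y.2 - 1) + 1) (y.2+1)]) (ha_nonneg _ _)) (hu _)) (hu y.2))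
  · exact le_refl _

lemma phi_summable (hA : 0 ≤ A) (hal : 0 ≤ al)
    (ha_nonneg : ∀ i j, 0 ≤ a i j)
    (ha_bound : ∀ i j, 1 ≤ i → 1 ≤ j → a i j ≤ A * ((i : ℝ) + (j : ℝ)))
    (hp_nonneg : ∀ i j, 0 ≤ p i j) (hp_le : ∀ i j, p i j ≤ 1)
    (hN_nonneg : ∀ i j s, 0 ≤ N i j s)
    (hN_bound : ∀ i j s, 1 ≤ i → 1 ≤ j → s ∈ Finset.Icc 1 (i+j-1) → N i j s ≤ al)
    (hu : ∀ j, 0 ≤ u (j+1)) (hF : Summable (pairF u)) (i : ℕ) (hi : 1 ≤ i) :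
    Summable (phiF a p N u i) := by
  refine Summable.of_nonneg_of_le (phi_nonneg a p N u ha_nonneg hp_le hN_nonneg hu i)
    (fun x => phi_le a p N u hA hal ha_nonneg ha_bound hp_nonneg hp_le hN_nonneg hN_bound hu i hi x)
    (hF.mul_left (al * A))

lemma brk_pointwise (n : ℕ) (x : ℕ × ℕ) :
    ∑ i ∈ Finset.Icc 1 n, ((i:ℝ) * (1/2)) * phiF a p N u i x = brkF a p N u n x := by
  have h1 : ∀ i : ℕ, ((i:ℝ) * (1/2)) * phiF a p N u i x
      = (1/2) * ((if i + 1 ≤ x.1 + x.2 + 2 then (i:ℝ) * N (x.1+1) (x.2+1) i else 0) *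
          ((1 - p (x.1+1) (x.2+1)) * a (x.1+1) (x.2+1) * u (x.1+1) * u (x.2+1))) := by
    intro i
    simp only [phiF]
    split_ifs with h
    · ring
    · ring
  rw [Finset.sum_congr rfl fun i _ => h1 i, ← Finset.mul_sum, ← Finset.sum_mul]
  rw [Finset.sum_ite, Finset.sum_const_zero, add_zero]
  have hfe : (Finset.Icc 1 n).filter (fun i => i + 1 ≤ x.1 + x.2 + 2)
      = Finset.Icc 1 (min n (x.1 + x.2 + 1)) := by
    ext i; simp only [Finset.mem_filter, Finset.mem_Icc]; omega
  rw [hfe, brkF]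
  ring

lemma break_eq (hbk : ∀ i, 1 ≤ i → Summable (fun m : ℕ => breakGainTerm a p N i m u))
    (ha_nonneg : ∀ i j, 0 ≤ a i j) (hp_le : ∀ i j, p i j ≤ 1)
    (hN_nonneg : ∀ i j s, 0 ≤ N i j s) (hu : ∀ j, 0 ≤ u (j+1))
    (hphi : ∀ i, 1 ≤ i → Summable (phiF a p N u i)) (n : ℕ) :
    ∑ i ∈ Finset.Icc 1 n, (i : ℝ) * breakGain a p N i u = ∑' x : ℕ × ℕ, brkF a p N u n x := by
  have key : ∀ i ∈ Finset.Icc 1 n, (i : ℝ) * breakGain a p N i u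
      = ∑' x : ℕ × ℕ, ((i:ℝ) * (1/2)) * phiF a p N u i x := by
    intro i hi
    rw [Finset.mem_Icc] at hi
    have hψ := psi_summable a p N u i (hbk i hi.1)
      (psi_nonneg a p N u ha_nonneg hp_le hN_nonneg hu i)
    have h2 : ∑' m : ℕ, breakGainTerm a p N i m u = ∑' y : ℕ × ℕ, psiF a p N u i y := by
      rw [Summable.tsum_prod' hψ (fun m => hψ.prod_factor m)]
      exact tsum_congr fun m => (bgt_eq a p N u i m)
    rw [breakGain, h2, psi_phi a p N u i hi.1, tsum_mul_left]
    ring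
  rw [Finset.sum_congr rfl key, ← Summable.tsum_finsetSum (fun i hi => by
    rw [Finset.mem_Icc] at hi
    exact (hphi i hi.1).mul_left _)]
  exact tsum_congr fun x => brk_pointwise a p N u n x

end Break2

section Cancel
variable {A al : ℝ} (a p : ℕ → ℕ → ℝ) (N : ℕ → ℕ → ℕ → ℝ) (u : ℕ → ℝ)

lemma brk_nonneg (ha_nonneg : ∀ i j, 0 ≤ a i j) (hp_le : ∀ i j, p i j ≤ 1)
    (hN_nonneg : ∀ i j s, 0 ≤ N i j s) (hu : ∀ j, 0 ≤ u (j+1)) (n : ℕ) (x : ℕ × ℕ) :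
    0 ≤ brkF a p N u n x := by
  rw [brkF]
  have hB : (0:ℝ) ≤ ∑ s ∈ Finset.Icc 1 (min n (x.1+x.2+1)), (s : ℝ) * N (x.1+1) (x.2+1) s :=
    Finset.sum_nonneg fun s _ => mul_nonneg (Nat.cast_nonneg s) (hN_nonneg _ _ _)
  exact mul_nonneg (mul_nonneg (by positivity) hB)
    (mul_nonneg (mul_nonneg (mul_nonneg (by linarith [hp_le (x.1+1) (x.2+1)])
      (ha_nonneg _ _)) (hu x.1)) (hu x.2))

lemma brkB_le (hN_nonneg : ∀ i j s, 0 ≤ N i j s)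
    (hN_mass : ∀ i j, 1 ≤ i → 1 ≤ j →
      ∑ s ∈ Finset.Icc 1 (i+j-1), (Nat.cast s : ℝ) * N i j s = (i : ℝ) + (j : ℝ)) (n : ℕ) (x : ℕ × ℕ) :
    ∑ s ∈ Finset.Icc 1 (min n (x.1+x.2+1)), (s : ℝ) * N (x.1+1) (x.2+1) s
      ≤ ((x.1+1 : ℕ) : ℝ) + ((x.2+1 : ℕ) : ℝ) := by
  have hsub : Finset.Icc 1 (min n (x.1+x.2+1)) ⊆ Finset.Icc 1 (x.1+x.2+1) := by
    intro s hs; simp only [Finset.mem_Icc] at hs ⊢; omega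
  have e1 : (x.1+1) + (x.2+1) - 1 = x.1+x.2+1 := by omega
  have := hN_mass (x.1+1) (x.2+1) (by omega) (by omega)
  rw [e1] at this
  rw [← this]
  exact Finset.sum_le_sum_of_subset_of_nonneg hsub fun s _ _ =>
    mul_nonneg (Nat.cast_nonneg s) (hN_nonneg _ _ _)

lemma los_nonneg (ha_nonneg : ∀ i j, 0 ≤ a i j) (hu : ∀ j, 0 ≤ u (j+1)) (n : ℕ) (x : ℕ × ℕ) :
    0 ≤ losF a u n x := by
  rw [losF]
  split_ifs with h
  · exact mul_nonneg (Nat.cast_nonneg _)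
      (mul_nonneg (mul_nonneg (ha_nonneg _ _) (hu x.1)) (hu x.2))
  · exact le_refl _

lemma cancel_bound (hA : 0 ≤ A)
    (ha_nonneg : ∀ i j, 0 ≤ a i j) (ha_symm : ∀ i j, a i j = a j i)
    (ha_bound : ∀ i j, 1 ≤ i → 1 ≤ j → a i j ≤ A * ((i : ℝ) + (j : ℝ)))
    (hp_nonneg : ∀ i j, 0 ≤ p i j) (hp_le : ∀ i j, p i j ≤ 1)
    (hN_nonneg : ∀ i j s, 0 ≤ N i j s)
    (hN_mass : ∀ i j, 1 ≤ i → 1 ≤ j →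
      ∑ s ∈ Finset.Icc 1 (i+j-1), (Nat.cast s : ℝ) * N i j s = (i : ℝ) + (j : ℝ))
    (hu : ∀ j, 0 ≤ u (j+1)) (n : ℕ) (x : ℕ × ℕ) :
    |gamF a p u n x + brkF a p N u n x - (losF a u n x + losF a u n (x.2, x.1)) / 2|
      ≤ A * (if n < x.1 + x.2 + 2 then pairF u x else 0) := by
  have hsymm : a (x.2+1) (x.1+1) = a (x.1+1) (x.2+1) := ha_symm _ _
  by_cases hc : x.1 + x.2 + 2 ≤ n
  · rw [if_neg (by omega)]
    have hg : gamF a p u n x = (1/2) * (((x.1+1 : ℕ) : ℝ) + ((x.2+1 : ℕ) : ℝ)) *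
        (p (x.1+1) (x.2+1) * a (x.1+1) (x.2+1) * u (x.1+1) * u (x.2+1)) := by
      rw [gamF]; exact if_pos hc
    have hb : brkF a p N u n x = (1/2) * (((x.1+1 : ℕ) : ℝ) + ((x.2+1 : ℕ) : ℝ)) *
        ((1 - p (x.1+1) (x.2+1)) * a (x.1+1) (x.2+1) * u (x.1+1) * u (x.2+1)) := by
      rw [brkF]
      have e0 : min n (x.1+x.2+1) = x.1+x.2+1 := by omega
      have e1 : (x.1+1) + (x.2+1) - 1 = x.1+x.2+1 := by omega
      have hm := hN_mass (x.1+1) (x.2+1) (by omega) (by omega)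
      rw [e1] at hm
      rw [e0, hm]
    have hl1 : losF a u n x = ((x.1+1 : ℕ) : ℝ) *
        (a (x.1+1) (x.2+1) * u (x.1+1) * u (x.2+1)) := by
      rw [losF]; exact if_pos (by omega)
    have hl2 : losF a u n (x.2, x.1) = ((x.2+1 : ℕ) : ℝ) *
        (a (x.1+1) (x.2+1) * u (x.2+1) * u (x.1+1)) := by
      rw [losF]
      dsimp only
      rw [if_pos (by omega), hsymm]
    rw [hg, hb, hl1, hl2]
    have : (1/2) * (((x.1+1 : ℕ) : ℝ) + ((x.2+1 : ℕ) : ℝ)) *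
        (p (x.1+1) (x.2+1) * a (x.1+1) (x.2+1) * u (x.1+1) * u (x.2+1))
      + (1/2) * (((x.1+1 : ℕ) : ℝ) + ((x.2+1 : ℕ) : ℝ)) *
        ((1 - p (x.1+1) (x.2+1)) * a (x.1+1) (x.2+1) * u (x.1+1) * u (x.2+1))
      - (((x.1+1 : ℕ) : ℝ) * (a (x.1+1) (x.2+1) * u (x.1+1) * u (x.2+1))
          + ((x.2+1 : ℕ) : ℝ) * (a (x.1+1) (x.2+1) * u (x.2+1) * u (x.1+1))) / 2 = 0 := by
      push_cast
      ring
    rw [this, abs_zero, mul_zero]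
  · rw [if_pos (by omega)]
    set S : ℝ := ((x.1+1 : ℕ) : ℝ) + ((x.2+1 : ℕ) : ℝ) with hS
    set aa : ℝ := a (x.1+1) (x.2+1) with haa
    set u1 : ℝ := u (x.1+1) with hu1
    set u2 : ℝ := u (x.2+1) with hu2
    have hg : gamF a p u n x = 0 := by rw [gamF]; exact if_neg hc
    have hu1' : 0 ≤ u1 := hu x.1
    have hu2' : 0 ≤ u2 := hu x.2
    have haa0 : 0 ≤ aa := ha_nonneg _ _
    have haaA : aa ≤ A * S := ha_bound (x.1+1) (x.2+1) (by omega) (by omega)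
    have hS1 : (1:ℝ) ≤ S := cast_ge_two x
    have hpf : pairF u x = S^2 * u1 * u2 := rfl
    have hb0 : 0 ≤ brkF a p N u n x := brk_nonneg a p N u ha_nonneg hp_le hN_nonneg hu n x
    have hb1 : brkF a p N u n x ≤ (1/2) * S * (aa * u1 * u2) := by
      rw [brkF]
      have hB := brkB_le N hN_nonneg hN_mass n x
      have hB0 : (0:ℝ) ≤ ∑ s ∈ Finset.Icc 1 (min n (x.1+x.2+1)), (s : ℝ) * N (x.1+1) (x.2+1) s :=
        Finset.sum_nonneg fun s _ => mul_nonneg (Nat.cast_nonneg s) (hN_nonneg _ _ _)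
      have hp1 : (0:ℝ) ≤ 1 - p (x.1+1) (x.2+1) := by linarith [hp_le (x.1+1) (x.2+1)]
      have hp2 : 1 - p (x.1+1) (x.2+1) ≤ 1 := by linarith [hp_nonneg (x.1+1) (x.2+1)]
      nlinarith [mul_nonneg (mul_nonneg haa0 hu1') hu2',
        mul_nonneg hB0 (mul_nonneg (mul_nonneg haa0 hu1') hu2')]
    have hl10 : 0 ≤ losF a u n x := los_nonneg a u ha_nonneg hu n x
    have hl20 : 0 ≤ losF a u n (x.2, x.1) := los_nonneg a u ha_nonneg hu n (x.2, x.1)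
    have hl1 : losF a u n x ≤ ((x.1+1 : ℕ) : ℝ) * (aa * u1 * u2) := by
      rw [losF]
      split_ifs with h
      · exact le_refl _
      · positivity
    have hl2 : losF a u n (x.2, x.1) ≤ ((x.2+1 : ℕ) : ℝ) * (aa * u1 * u2) := by
      rw [losF]
      dsimp only
      split_ifs with h
      · rw [hsymm]; nlinarith [mul_nonneg (mul_nonneg haa0 hu1') hu2']
      · positivity
    have hsum : ((x.1+1 : ℕ) : ℝ) * (aa * u1 * u2) + ((x.2+1 : ℕ) : ℝ) * (aa * u1 * u2)
        = S * (aa * u1 * u2) := by rw [hS]; ring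
    have key : S * (aa * u1 * u2) ≤ A * (S^2 * u1 * u2) := by
      nlinarith [mul_nonneg hu1' hu2', mul_nonneg (mul_nonneg (by linarith : (0:ℝ) ≤ S)
        (mul_nonneg hu1' hu2')) (by linarith : (0:ℝ) ≤ A * S - aa)]
    have hApf : 0 ≤ A * (S^2 * u1 * u2) := by positivity
    clear_value S aa u1 u2
    rw [hg, hpf]
    rw [abs_le]
    constructor
    · linarith
    · linarith
end Cancel

section KeyBound
variable {A al : ℝ} (a p : ℕ → ℕ → ℝ) (N : ℕ → ℕ → ℕ → ℝ) (u : ℕ → ℝ)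

lemma los_le (hA : 0 ≤ A) (ha_nonneg : ∀ i j, 0 ≤ a i j)
    (ha_bound : ∀ i j, 1 ≤ i → 1 ≤ j → a i j ≤ A * ((i : ℝ) + (j : ℝ)))
    (hu : ∀ j, 0 ≤ u (j+1)) (n : ℕ) (x : ℕ × ℕ) :
    losF a u n x ≤ ((n : ℝ) * A) * pairF u x := by
  have hpf : 0 ≤ pairF u x := pairF_nonneg hu x
  rw [losF]
  split_ifs with h
  · have hJn : ((x.1+1 : ℕ) : ℝ) ≤ (n : ℝ) := Nat.cast_le.mpr h
    have hJ0 : (0:ℝ) ≤ ((x.1+1 : ℕ) : ℝ) := Nat.cast_nonneg _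
    have haaA := ha_bound (x.1+1) (x.2+1) (by omega) (by omega)
    have haa0 := ha_nonneg (x.1+1) (x.2+1)
    have hu1 := hu x.1
    have hu2 := hu x.2
    have hS1 : (1:ℝ) ≤ ((x.1+1 : ℕ) : ℝ) + ((x.2+1 : ℕ) : ℝ) := cast_ge_two x
    rw [pairF]
    set S : ℝ := ((x.1+1 : ℕ) : ℝ) + ((x.2+1 : ℕ) : ℝ) with hS
    have step1 : a (x.1+1) (x.2+1) * u (x.1+1) * u (x.2+1) ≤ A * S * u (x.1+1) * u (x.2+1) := by
      nlinarith [mul_nonneg hu1 hu2]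
    have step2 : A * S * u (x.1+1) * u (x.2+1) ≤ A * S^2 * u (x.1+1) * u (x.2+1) := by
      nlinarith [mul_nonneg (mul_nonneg hA hu1) hu2, (by nlinarith : (0:ℝ) ≤ S^2 - S)]
    have step0 : (0:ℝ) ≤ a (x.1+1) (x.2+1) * u (x.1+1) * u (x.2+1) := by positivity
    calc ((x.1+1 : ℕ) : ℝ) * (a (x.1+1) (x.2+1) * u (x.1+1) * u (x.2+1))
        ≤ (n : ℝ) * (a (x.1+1) (x.2+1) * u (x.1+1) * u (x.2+1)) :=
          mul_le_mul_of_nonneg_right hJn step0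
      _ ≤ (n : ℝ) * (A * S^2 * u (x.1+1) * u (x.2+1)) := by
          refine mul_le_mul_of_nonneg_left (by linarith) (Nat.cast_nonneg n)
      _ = ((n : ℝ) * A) * (S^2 * u (x.1+1) * u (x.2+1)) := by ring
  · positivity

lemma brk_le (hA : 0 ≤ A) (ha_nonneg : ∀ i j, 0 ≤ a i j)
    (ha_bound : ∀ i j, 1 ≤ i → 1 ≤ j → a i j ≤ A * ((i : ℝ) + (j : ℝ)))
    (hp_nonneg : ∀ i j, 0 ≤ p i j) (hp_le : ∀ i j, p i j ≤ 1)
    (hN_nonneg : ∀ i j s, 0 ≤ N i j s)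
    (hN_mass : ∀ i j, 1 ≤ i → 1 ≤ j →
      ∑ s ∈ Finset.Icc 1 (i+j-1), (Nat.cast s : ℝ) * N i j s = (i : ℝ) + (j : ℝ))
    (hu : ∀ j, 0 ≤ u (j+1)) (n : ℕ) (x : ℕ × ℕ) :
    brkF a p N u n x ≤ A * pairF u x := by
  set S : ℝ := ((x.1+1 : ℕ) : ℝ) + ((x.2+1 : ℕ) : ℝ) with hS
  set aa : ℝ := a (x.1+1) (x.2+1) with haa
  set u1 : ℝ := u (x.1+1) with hu1
  set u2 : ℝ := u (x.2+1) with hu2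
  have hu1' : 0 ≤ u1 := hu x.1
  have hu2' : 0 ≤ u2 := hu x.2
  have haa0 : 0 ≤ aa := ha_nonneg _ _
  have haaA : aa ≤ A * S := ha_bound (x.1+1) (x.2+1) (by omega) (by omega)
  have hS1 : (1:ℝ) ≤ S := cast_ge_two x
  have hpf : pairF u x = S^2 * u1 * u2 := rfl
  have hb1 : brkF a p N u n x ≤ (1/2) * S * (aa * u1 * u2) := by
    rw [brkF]
    have hB := brkB_le N hN_nonneg hN_mass n x
    have hB0 : (0:ℝ) ≤ ∑ s ∈ Finset.Icc 1 (min n (x.1+x.2+1)), (s : ℝ) * N (x.1+1) (x.2+1) s :=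
      Finset.sum_nonneg fun s _ => mul_nonneg (Nat.cast_nonneg s) (hN_nonneg _ _ _)
    have hp1 : (0:ℝ) ≤ 1 - p (x.1+1) (x.2+1) := by linarith [hp_le (x.1+1) (x.2+1)]
    have hp2 : 1 - p (x.1+1) (x.2+1) ≤ 1 := by linarith [hp_nonneg (x.1+1) (x.2+1)]
    nlinarith [mul_nonneg (mul_nonneg haa0 hu1') hu2',
      mul_nonneg hB0 (mul_nonneg (mul_nonneg haa0 hu1') hu2')]
  have key : S * (aa * u1 * u2) ≤ A * (S^2 * u1 * u2) := by
    nlinarith [mul_nonneg hu1' hu2', mul_nonneg (mul_nonneg (by linarith : (0:ℝ) ≤ S)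
      (mul_nonneg hu1' hu2')) (by linarith : (0:ℝ) ≤ A * S - aa)]
  have hApf : 0 ≤ A * (S^2 * u1 * u2) := by positivity
  clear_value S aa u1 u2
  rw [hpf]
  linarith

lemma key_bound (hA : 0 ≤ A) (hal : 0 ≤ al)
    (ha_nonneg : ∀ i j, 0 ≤ a i j) (ha_symm : ∀ i j, a i j = a j i)
    (ha_bound : ∀ i j, 1 ≤ i → 1 ≤ j → a i j ≤ A * ((i : ℝ) + (j : ℝ)))
    (hp_nonneg : ∀ i j, 0 ≤ p i j) (hp_le : ∀ i j, p i j ≤ 1)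
    (hN_nonneg : ∀ i j s, 0 ≤ N i j s)
    (hN_bound : ∀ i j s, 1 ≤ i → 1 ≤ j → s ∈ Finset.Icc 1 (i+j-1) → N i j s ≤ al)
    (hN_mass : ∀ i j, 1 ≤ i → 1 ≤ j →
      ∑ s ∈ Finset.Icc 1 (i+j-1), (Nat.cast s : ℝ) * N i j s = (i : ℝ) + (j : ℝ))
    (hu : ∀ j, 0 ≤ u (j+1)) (hF : Summable (pairF u))
    (hbk : ∀ i, 1 ≤ i → Summable (fun m : ℕ => breakGainTerm a p N i m u)) (n : ℕ) :
    |∑ i ∈ Finset.Icc 1 n, (i : ℝ) * coagRHS a p N i u|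
      ≤ A * ∑' x : ℕ × ℕ, (if n < x.1 + x.2 + 2 then pairF u x else 0) := by
  have hgamS : Summable (gamF a p u n) := by
    refine summable_of_ne_finset_zero (s := Finset.range n ×ˢ Finset.range n) fun x hx => ?_
    simp only [Finset.mem_product, Finset.mem_range, not_and] at hx
    rw [gamF]
    exact if_neg (by omega)
  have hlosS : Summable (losF a u n) :=
    Summable.of_nonneg_of_le (fun x => los_nonneg a u ha_nonneg hu n x)
      (fun x => los_le a u hA ha_nonneg ha_bound hu n x) (hF.mul_left _)
  have hlos'S : Summable (fun x : ℕ × ℕ => losF a u n (x.2, x.1)) :=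
    (hlosS.comp_injective (Equiv.prodComm ℕ ℕ).injective).congr (fun x => rfl)
  have hbrkS : Summable (brkF a p N u n) :=
    Summable.of_nonneg_of_le (fun x => brk_nonneg a p N u ha_nonneg hp_le hN_nonneg hu n x)
      (fun x => brk_le a p N u hA ha_nonneg ha_bound hp_nonneg hp_le hN_nonneg hN_mass hu n x)
      (hF.mul_left _)
  have htail0 : ∀ x : ℕ × ℕ, 0 ≤ (if n < x.1 + x.2 + 2 then pairF u x else 0) := by
    intro x
    split_ifs
    · exact pairF_nonneg hu x
    · exact le_refl _
  have htailS : Summable (fun x : ℕ × ℕ => if n < x.1 + x.2 + 2 then pairF u x else 0) := by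
    refine Summable.of_nonneg_of_le htail0 (fun x => ?_) hF
    split_ifs
    · exact le_refl _
    · exact pairF_nonneg hu x
  have hphi : ∀ i, 1 ≤ i → Summable (phiF a p N u i) := fun i hi =>
    phi_summable a p N u hA hal ha_nonneg ha_bound hp_nonneg hp_le hN_nonneg hN_bound hu hF i hi
  have hsplit : ∑ i ∈ Finset.Icc 1 n, (i : ℝ) * coagRHS a p N i u
      = (∑ i ∈ Finset.Icc 1 n, (i : ℝ) * coagGain a p i u)
        - (∑ i ∈ Finset.Icc 1 n, (i : ℝ) * coagLoss a i u)
        + (∑ i ∈ Finset.Icc 1 n, (i : ℝ) * breakGain a p N i u) := by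
    rw [← Finset.sum_sub_distrib, ← Finset.sum_add_distrib]
    refine Finset.sum_congr rfl fun i _ => ?_
    rw [coagRHS]
    ring
  rw [hsplit, gain_eq a p u n, loss_eq a u n hlosS,
    break_eq a p N u hbk ha_nonneg hp_le hN_nonneg hu hphi n]
  have hswap : ∑' x : ℕ × ℕ, losF a u n x = ∑' x : ℕ × ℕ, losF a u n (x.2, x.1) :=
    ((Equiv.prodComm ℕ ℕ).tsum_eq (losF a u n)).symm
  have hcomb : ∑' x : ℕ × ℕ, gamF a p u n x - ∑' x : ℕ × ℕ, losF a u n x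
        + ∑' x : ℕ × ℕ, brkF a p N u n x
      = ∑' x : ℕ × ℕ, (gamF a p u n x + brkF a p N u n x
          - (losF a u n x + losF a u n (x.2, x.1)) / 2) := by
    rw [Summable.tsum_sub (hgamS.add hbrkS) ((hlosS.add hlos'S).div_const 2)]
    rw [Summable.tsum_add hgamS hbrkS, tsum_div_const, Summable.tsum_add hlosS hlos'S]
    rw [← hswap]
    ring
  rw [hcomb]
  have hcb : ∀ x : ℕ × ℕ, |gamF a p u n x + brkF a p N u n x
      - (losF a u n x + losF a u n (x.2, x.1)) / 2|
        ≤ A * (if n < x.1 + x.2 + 2 then pairF u x else 0) := fun x =>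
    cancel_bound a p N u hA ha_nonneg ha_symm ha_bound hp_nonneg hp_le hN_nonneg hN_mass hu n x
  have habsS : Summable (fun x : ℕ × ℕ => |gamF a p u n x + brkF a p N u n x
      - (losF a u n x + losF a u n (x.2, x.1)) / 2|) :=
    Summable.of_nonneg_of_le (fun x => abs_nonneg _) hcb (htailS.mul_left A)
  calc |∑' x : ℕ × ℕ, (gamF a p u n x + brkF a p N u n x
          - (losF a u n x + losF a u n (x.2, x.1)) / 2)|
      ≤ ∑' x : ℕ × ℕ, |gamF a p u n x + brkF a p N u n x
          - (losF a u n x + losF a u n (x.2, x.1)) / 2| := by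
        have := norm_tsum_le_tsum_norm (f := fun x : ℕ × ℕ => gamF a p u n x + brkF a p N u n x
          - (losF a u n x + losF a u n (x.2, x.1)) / 2) (by simpa [Real.norm_eq_abs] using habsS)
        simpa [Real.norm_eq_abs] using this
    _ ≤ ∑' x : ℕ × ℕ, A * (if n < x.1 + x.2 + 2 then pairF u x else 0) :=
        Summable.tsum_le_tsum hcb habsS (htailS.mul_left A)
    _ = A * ∑' x : ℕ × ℕ, (if n < x.1 + x.2 + 2 then pairF u x else 0) := tsum_mul_left

end KeyBound

lemma tail_tendsto {u : ℕ → ℝ} (hF : Summable (pairF u)) :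
    Filter.Tendsto (fun n => ∑' x : ℕ × ℕ, (if n < x.1 + x.2 + 2 then pairF u x else 0))
      Filter.atTop (nhds 0) := by
  set Q : ℕ → Finset (ℕ × ℕ) :=
    fun n => (Finset.range n ×ˢ Finset.range n).filter (fun x => x.1 + x.2 + 2 ≤ n) with hQ
  have hmem : ∀ n (x : ℕ × ℕ), x ∈ Q n ↔ x.1 + x.2 + 2 ≤ n := by
    intro n x
    simp only [hQ, Finset.mem_filter, Finset.mem_product, Finset.mem_range]
    omega
  have hid : ∀ n, ∑' x : ℕ × ℕ, (if n < x.1 + x.2 + 2 then pairF u x else 0)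
      = (∑' x : ℕ × ℕ, pairF u x) - ∑ x ∈ Q n, pairF u x := by
    intro n
    have h1 := Summable.sum_add_tsum_compl (s := Q n) hF
    have h2 : ∑' (x : ↑((Q n : Set (ℕ × ℕ))ᶜ)), pairF u ↑x
        = ∑' x : ℕ × ℕ, (if n < x.1 + x.2 + 2 then pairF u x else 0) := by
      rw [tsum_subtype]
      refine tsum_congr fun x => ?_
      rw [Set.indicator_apply]
      by_cases hx : x ∈ Q n
      · have hc := (hmem n x).mp hx
        rw [if_neg (by simpa using hx), if_neg (by omega)]
      · have hc : ¬(x.1 + x.2 + 2 ≤ n) := fun h => hx ((hmem n x).mpr h)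
        rw [if_pos (by simpa using hx), if_pos (by omega)]
    linarith [h1, h2.symm]
  have hmono : Monotone Q := by
    intro m n hmn x hx
    rw [hmem] at hx ⊢
    omega
  have hQt : Filter.Tendsto Q Filter.atTop Filter.atTop :=
    Filter.tendsto_atTop_finset_of_monotone hmono
      (fun x => ⟨x.1 + x.2 + 2, (hmem _ x).mpr le_rfl⟩)
  have hsum : Filter.Tendsto (fun n => ∑ x ∈ Q n, pairF u x) Filter.atTop
      (nhds (∑' x : ℕ × ℕ, pairF u x)) := hF.hasSum.comp hQt
  have hfin := hsum.const_sub (∑' x : ℕ × ℕ, pairF u x)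
  rw [sub_self] at hfin
  refine hfin.congr fun n => (hid n).symm

lemma sq_term_le {u : ℕ → ℝ} (hu : ∀ j, 0 ≤ u (j+1)) (j : ℕ) :
    u (j+1) ≤ ((j+1 : ℕ) : ℝ)^2 * u (j+1) := by
  have h1 : (1:ℝ) ≤ ((j+1 : ℕ) : ℝ)^2 := by
    have : (1:ℝ) ≤ ((j+1 : ℕ) : ℝ) := by exact_mod_cast Nat.one_le_iff_ne_zero.mpr (by omega)
    nlinarith
  nlinarith [mul_nonneg (hu j) (sub_nonneg.mpr h1)]

lemma pairF_facts {u : ℕ → ℝ} {C : ℝ} (hu : ∀ j, 0 ≤ u (j+1)) (hC0 : 0 ≤ C)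
    (hS2 : Summable (fun i : ℕ => (i : ℝ)^2 * u i))
    (hC : ∑' i : ℕ, (i : ℝ)^2 * u i ≤ C) :
    Summable (pairF u) ∧ ∑' x : ℕ × ℕ, pairF u x ≤ 4 * C^2 := by
  have hgS : Summable (fun j : ℕ => ((j+1 : ℕ) : ℝ)^2 * u (j+1)) :=
    (summable_nat_add_iff (f := fun i : ℕ => (i : ℝ)^2 * u i) 1).mpr hS2
  have hg0 : ∀ j, (0:ℝ) ≤ ((j+1 : ℕ) : ℝ)^2 * u (j+1) := fun j =>
    mul_nonneg (sq_nonneg _) (hu j)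
  have hgsum : ∑' j : ℕ, ((j+1 : ℕ) : ℝ)^2 * u (j+1) ≤ C := by
    have h := Summable.tsum_eq_zero_add hS2
    have hf00 : ((0 : ℕ) : ℝ)^2 * u 0 = 0 := by simp
    rw [hf00, zero_add] at h
    rw [← h]
    exact hC
  have hgsum0 : (0:ℝ) ≤ ∑' j : ℕ, ((j+1 : ℕ) : ℝ)^2 * u (j+1) := tsum_nonneg hg0
  have h0S : Summable (fun j : ℕ => u (j+1)) :=
    Summable.of_nonneg_of_le hu (sq_term_le hu) hgS
  have h0sum : ∑' j : ℕ, u (j+1) ≤ C :=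
    le_trans (Summable.tsum_le_tsum (sq_term_le hu) h0S hgS) hgsum
  have h0sum0 : (0:ℝ) ≤ ∑' j : ℕ, u (j+1) := tsum_nonneg hu
  have hf1 : Summable (fun x : ℕ × ℕ => (((x.1+1 : ℕ) : ℝ)^2 * u (x.1+1)) * u (x.2+1)) :=
    Summable.mul_of_nonneg (f := fun j : ℕ => ((j+1 : ℕ) : ℝ)^2 * u (j+1))
      (g := fun j : ℕ => u (j+1)) hgS h0S (Pi.le_def.mpr hg0) (Pi.le_def.mpr hu)
  have hf2 : Summable (fun x : ℕ × ℕ => u (x.1+1) * (((x.2+1 : ℕ) : ℝ)^2 * u (x.2+1))) :=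
    Summable.mul_of_nonneg (f := fun j : ℕ => u (j+1))
      (g := fun j : ℕ => ((j+1 : ℕ) : ℝ)^2 * u (j+1)) h0S hgS (Pi.le_def.mpr hu) (Pi.le_def.mpr hg0)
  have hle : ∀ x : ℕ × ℕ, pairF u x ≤ 2 * ((((x.1+1 : ℕ) : ℝ)^2 * u (x.1+1)) * u (x.2+1))
      + 2 * (u (x.1+1) * (((x.2+1 : ℕ) : ℝ)^2 * u (x.2+1))) := by
    intro x
    rw [pairF]
    have hu1 := hu x.1
    have hu2 := hu x.2
    nlinarith [sq_nonneg (((x.1+1 : ℕ) : ℝ) - ((x.2+1 : ℕ) : ℝ)), mul_nonneg hu1 hu2]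
  have hbS : Summable (fun x : ℕ × ℕ => 2 * ((((x.1+1 : ℕ) : ℝ)^2 * u (x.1+1)) * u (x.2+1))
      + 2 * (u (x.1+1) * (((x.2+1 : ℕ) : ℝ)^2 * u (x.2+1)))) :=
    (hf1.mul_left 2).add (hf2.mul_left 2)
  have hFS : Summable (pairF u) :=
    Summable.of_nonneg_of_le (pairF_nonneg hu) hle hbS
  refine ⟨hFS, ?_⟩
  have hprod1 : ∑' x : ℕ × ℕ, (((x.1+1 : ℕ) : ℝ)^2 * u (x.1+1)) * u (x.2+1)
      = (∑' j : ℕ, ((j+1 : ℕ) : ℝ)^2 * u (j+1)) * (∑' j : ℕ, u (j+1)) := by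
    calc ∑' x : ℕ × ℕ, (((x.1+1 : ℕ) : ℝ)^2 * u (x.1+1)) * u (x.2+1)
        = ∑' (b : ℕ) (c : ℕ), (((b+1 : ℕ) : ℝ)^2 * u (b+1)) * u (c+1) :=
          Summable.tsum_prod' hf1 (fun b => h0S.mul_left (((b+1 : ℕ) : ℝ)^2 * u (b+1)))
      _ = ∑' (b : ℕ), (((b+1 : ℕ) : ℝ)^2 * u (b+1)) * ∑' (c : ℕ), u (c+1) :=
          tsum_congr fun b => tsum_mul_left
      _ = _ := tsum_mul_right
  have hprod2 : ∑' x : ℕ × ℕ, u (x.1+1) * (((x.2+1 : ℕ) : ℝ)^2 * u (x.2+1))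
      = (∑' j : ℕ, u (j+1)) * (∑' j : ℕ, ((j+1 : ℕ) : ℝ)^2 * u (j+1)) := by
    calc ∑' x : ℕ × ℕ, u (x.1+1) * (((x.2+1 : ℕ) : ℝ)^2 * u (x.2+1))
        = ∑' (b : ℕ) (c : ℕ), u (b+1) * (((c+1 : ℕ) : ℝ)^2 * u (c+1)) :=
          Summable.tsum_prod' hf2 (fun b => hgS.mul_left (u (b+1)))
      _ = ∑' (b : ℕ), u (b+1) * ∑' (c : ℕ), ((c+1 : ℕ) : ℝ)^2 * u (c+1) :=
          tsum_congr fun b => tsum_mul_left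
      _ = _ := tsum_mul_right
  have hCC1 : (∑' j : ℕ, ((j+1 : ℕ) : ℝ)^2 * u (j+1)) * (∑' j : ℕ, u (j+1)) ≤ C * C :=
    mul_le_mul hgsum h0sum h0sum0 hC0
  have hCC2 : (∑' j : ℕ, u (j+1)) * (∑' j : ℕ, ((j+1 : ℕ) : ℝ)^2 * u (j+1)) ≤ C * C :=
    mul_le_mul h0sum hgsum hgsum0 hC0
  calc ∑' x : ℕ × ℕ, pairF u x
      ≤ ∑' x : ℕ × ℕ, (2 * ((((x.1+1 : ℕ) : ℝ)^2 * u (x.1+1)) * u (x.2+1))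
          + 2 * (u (x.1+1) * (((x.2+1 : ℕ) : ℝ)^2 * u (x.2+1)))) :=
        Summable.tsum_le_tsum hle hFS hbS
    _ = 2 * ∑' x : ℕ × ℕ, (((x.1+1 : ℕ) : ℝ)^2 * u (x.1+1)) * u (x.2+1)
        + 2 * ∑' x : ℕ × ℕ, u (x.1+1) * (((x.2+1 : ℕ) : ℝ)^2 * u (x.2+1)) := by
        rw [Summable.tsum_add (hf1.mul_left 2) (hf2.mul_left 2), tsum_mul_left, tsum_mul_left]
    _ ≤ 2 * (C * C) + 2 * (C * C) := by
        rw [hprod1, hprod2]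
        linarith
    _ = 4 * C^2 := by ring


/-- Mass conservation: a nonnegative classical solution of the discrete
coagulation equations with collisional breakage with uniformly bounded second
moment (and finite first moment) conserves the total mass `∑_{i≥1} i wᵢ(t)`. -/
theorem mass_conservation
    (T : ℝ) (hT : 0 < T) (β : ℝ) (hβ1 : 1 < β) (hβ2 : β ≤ 2)
    (A α₀ : ℝ) (hA : 0 < A) (hα₀ : 0 < α₀)
    (a p : ℕ → ℕ → ℝ) (N : ℕ → ℕ → ℕ → ℝ)
    (ha_nonneg : ∀ i j, 0 ≤ a i j) (ha_symm : ∀ i j, a i j = a j i)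
    (ha_bound : ∀ i j, 1 ≤ i → 1 ≤ j → a i j ≤ A * ((i : ℝ) + (j : ℝ)))
    (hp_nonneg : ∀ i j, 0 ≤ p i j) (hp_symm : ∀ i j, p i j = p j i)
    (hp_le : ∀ i j, p i j ≤ 1)
    (hN_nonneg : ∀ i j s, 0 ≤ N i j s) (hN_symm : ∀ i j s, N i j s = N j i s)
    (hN_bound : ∀ i j s, 1 ≤ i → 1 ≤ j → s ∈ Finset.Icc 1 (i+j-1) → N i j s ≤ α₀)
    (hN_mass : ∀ i j, 1 ≤ i → 1 ≤ j →
      ∑ s ∈ Finset.Icc 1 (i+j-1), (Nat.cast s : ℝ) * N i j s = (i : ℝ) + (j : ℝ))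
    (w : ℕ → ℝ → ℝ) (hw : IsCoagBreakSol a p N T w)
    (hM2 : ∃ C : ℝ, ∀ t ∈ Set.Icc (0:ℝ) T,
      Summable (fun i : ℕ => (Nat.cast i : ℝ) ^ 2 * w i t) ∧
      ∑' i : ℕ, (Nat.cast i : ℝ) ^ 2 * w i t ≤ C)
    (hM1 : ∀ t ∈ Set.Icc (0:ℝ) T, Summable (fun i : ℕ => (Nat.cast i : ℝ) * w i t)) :
    ∀ t ∈ Set.Icc (0:ℝ) T,
      ∑' i : ℕ, (Nat.cast i : ℝ) * w i t = ∑' i : ℕ, (Nat.cast i : ℝ) * w i 0 := by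
  
  obtain ⟨hreg, hnonneg, heqn⟩ := hw
  obtain ⟨C, hC⟩ := hM2
  have h0T : (0:ℝ) ∈ Set.Icc (0:ℝ) T := ⟨le_rfl, hT.le⟩
  have hterm0 : ∀ i : ℕ, 0 ≤ (Nat.cast i : ℝ) ^ 2 * w i 0 := by
    intro i
    match i with
    | 0 => simp
    | (i+1) => exact mul_nonneg (sq_nonneg _) (hnonneg (i+1) (by omega) 0 h0T)
  have hC0 : 0 ≤ C := le_trans (tsum_nonneg hterm0) (hC 0 h0T).2
  intro t ht
  -- pointwise-in-time data
  have hu : ∀ s ∈ Set.Icc (0:ℝ) T, ∀ j : ℕ, 0 ≤ w (j+1) s :=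
    fun s hs j => hnonneg (j+1) (by omega) s hs
  have hFs : ∀ s ∈ Set.Icc (0:ℝ) T, Summable (pairF (fun j => w j s)) ∧
      ∑' x : ℕ × ℕ, pairF (fun j => w j s) x ≤ 4 * C^2 :=
    fun s hs => pairF_facts (hu s hs) hC0 (hC s hs).1 (hC s hs).2
  -- the truncated derivative and its bound
  have hKB : ∀ n : ℕ, ∀ s ∈ Set.Icc (0:ℝ) T,
      |∑ i ∈ Finset.Icc 1 n, (Nat.cast i : ℝ) * coagRHS a p N i (fun j => w j s)|
        ≤ A * ∑' x : ℕ × ℕ, (if n < x.1 + x.2 + 2 then pairF (fun j => w j s) x else 0) := by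
    intro n s hs
    exact key_bound a p N (fun j => w j s) hA.le hα₀.le ha_nonneg ha_symm ha_bound hp_nonneg
      hp_le hN_nonneg hN_bound hN_mass (hu s hs) (hFs s hs).1
      (fun i hi => (heqn i hi s hs).2.1) n
  have htail_le : ∀ n : ℕ, ∀ s ∈ Set.Icc (0:ℝ) T,
      ∑' x : ℕ × ℕ, (if n < x.1 + x.2 + 2 then pairF (fun j => w j s) x else 0)
        ≤ 4 * C^2 := by
    intro n s hs
    have h1 : Summable (fun x : ℕ × ℕ =>
        if n < x.1 + x.2 + 2 then pairF (fun j => w j s) x else 0) := by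
      refine Summable.of_nonneg_of_le (fun x => ?_) (fun x => ?_) (hFs s hs).1
      · split_ifs
        · exact pairF_nonneg (hu s hs) x
        · exact le_refl _
      · split_ifs
        · exact le_refl _
        · exact pairF_nonneg (hu s hs) x
    refine le_trans (Summable.tsum_le_tsum (fun x => ?_) h1 (hFs s hs).1) (hFs s hs).2
    split_ifs
    · exact le_refl _
    · exact pairF_nonneg (hu s hs) x
  have hDbound : ∀ n : ℕ, ∀ s ∈ Set.Icc (0:ℝ) T,
      |∑ i ∈ Finset.Icc 1 n, (Nat.cast i : ℝ) * coagRHS a p N i (fun j => w j s)|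
        ≤ A * (4 * C^2) := fun n s hs =>
    le_trans (hKB n s hs) (mul_le_mul_of_nonneg_left (htail_le n s hs) hA.le)
  have hDtend : ∀ s ∈ Set.Icc (0:ℝ) T,
      Filter.Tendsto (fun n => ∑ i ∈ Finset.Icc 1 n, (Nat.cast i : ℝ) * coagRHS a p N i (fun j => w j s))
        Filter.atTop (nhds 0) := by
    intro s hs
    have hg : Filter.Tendsto (fun n => A * ∑' x : ℕ × ℕ,
        (if n < x.1 + x.2 + 2 then pairF (fun j => w j s) x else 0)) Filter.atTop (nhds 0) := by
      have := (tail_tendsto (hFs s hs).1).const_mul A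
      simpa using this
    exact squeeze_zero_norm (fun n => by rw [Real.norm_eq_abs]; exact hKB n s hs) hg
  -- truncated mass and its derivative
  have hder : ∀ n : ℕ, ∀ s ∈ Set.Icc (0:ℝ) T,
      HasDerivWithinAt (fun r => ∑ i ∈ Finset.Icc 1 n, (Nat.cast i : ℝ) * w i r)
        (∑ i ∈ Finset.Icc 1 n, (Nat.cast i : ℝ) * coagRHS a p N i (fun j => w j s))
        (Set.Icc 0 T) s := by
    intro n s hs
    refine HasDerivWithinAt.fun_sum fun i hi => ?_
    rw [Finset.mem_Icc] at hi
    exact ((heqn i hi.1 s hs).2.2).const_mul ((i : ℝ))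
  have hreg' : ∀ n : ℕ, ContDiffOn ℝ 1 (fun r => ∑ i ∈ Finset.Icc 1 n, (Nat.cast i : ℝ) * w i r)
      (Set.Icc 0 T) := by
    intro n
    refine ContDiffOn.sum fun i hi => ?_
    rw [Finset.mem_Icc] at hi
    exact (contDiffOn_const.mul (hreg i hi.1))
  have hunique : UniqueDiffOn ℝ (Set.Icc (0:ℝ) T) := uniqueDiffOn_Icc hT
  have hDcont : ∀ n : ℕ, ContinuousOn
      (fun s => ∑ i ∈ Finset.Icc 1 n, (Nat.cast i : ℝ) * coagRHS a p N i (fun j => w j s))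
      (Set.Icc 0 T) := by
    intro n
    have h1 : ContinuousOn
        (derivWithin (fun r => ∑ i ∈ Finset.Icc 1 n, (Nat.cast i : ℝ) * w i r) (Set.Icc 0 T))
        (Set.Icc 0 T) := (hreg' n).continuousOn_derivWithin hunique le_rfl
    refine h1.congr fun s hs => ?_
    exact ((hder n s hs).derivWithin (hunique s hs)).symm
  -- FTC on [0, t]
  have hsub : Set.Icc (0:ℝ) t ⊆ Set.Icc (0:ℝ) T := Set.Icc_subset_Icc le_rfl ht.2
  have hfund : ∀ n : ℕ,
      ∫ s in (0:ℝ)..t, (∑ i ∈ Finset.Icc 1 n, (Nat.cast i : ℝ) * coagRHS a p N i (fun j => w j s))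
        = (∑ i ∈ Finset.Icc 1 n, (Nat.cast i : ℝ) * w i t) - (∑ i ∈ Finset.Icc 1 n, (Nat.cast i : ℝ) * w i 0) := by
    intro n
    refine intervalIntegral.integral_eq_sub_of_hasDeriv_right_of_le ht.1
      (((hreg' n).continuousOn).mono hsub) (fun x hx => ?_) ?_
    · have hxm : x ∈ Set.Icc (0:ℝ) T := hsub ⟨hx.1.le, hx.2.le⟩
      exact (hder n x hxm).mono_of_mem_nhdsWithin
        (Icc_mem_nhdsGT_of_mem ⟨hx.1.le, lt_of_lt_of_le hx.2 ht.2⟩)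
    · refine ContinuousOn.intervalIntegrable ?_
      rw [Set.uIcc_of_le ht.1]
      exact (hDcont n).mono hsub
  -- dominated convergence
  have hint : Filter.Tendsto (fun n =>
      ∫ s in (0:ℝ)..t, (∑ i ∈ Finset.Icc 1 n, (Nat.cast i : ℝ) * coagRHS a p N i (fun j => w j s)))
      Filter.atTop (nhds 0) := by
    have hIoc : Set.Ioc (0:ℝ) t ⊆ Set.Icc (0:ℝ) T := fun x hx => hsub ⟨hx.1.le, hx.2⟩
    have key := MeasureTheory.tendsto_integral_of_dominated_convergence
      (μ := MeasureTheory.volume.restrict (Set.Ioc (0:ℝ) t))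
      (F := fun n s => ∑ i ∈ Finset.Icc 1 n, (Nat.cast i : ℝ) * coagRHS a p N i (fun j => w j s))
      (f := fun _ => (0:ℝ)) (bound := fun _ => A * (4 * C^2))
      (fun n => (((hDcont n).mono hIoc)).aestronglyMeasurable measurableSet_Ioc)
      (MeasureTheory.integrableOn_const (hs := measure_Ioc_lt_top.ne))
      (fun n => (MeasureTheory.ae_restrict_iff' measurableSet_Ioc).mpr
        (Filter.Eventually.of_forall fun s hs => by
          rw [Real.norm_eq_abs]
          exact hDbound n s (hIoc hs)))
      ((MeasureTheory.ae_restrict_iff' measurableSet_Ioc).mpr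
        (Filter.Eventually.of_forall fun s hs => hDtend s (hIoc hs)))
    rw [MeasureTheory.integral_zero] at key
    have heq : ∀ n : ℕ, ∫ s in (0:ℝ)..t,
        (∑ i ∈ Finset.Icc 1 n, (Nat.cast i : ℝ) * coagRHS a p N i (fun j => w j s))
        = ∫ s in Set.Ioc (0:ℝ) t,
            (∑ i ∈ Finset.Icc 1 n, (Nat.cast i : ℝ) * coagRHS a p N i (fun j => w j s)) := by
      intro n
      rw [intervalIntegral.intervalIntegral_eq_integral_uIoc, Set.uIoc_of_le ht.1]
      simp [ht.1]
    exact (Filter.Tendsto.congr (fun n => (heq n).symm) key)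
  -- partial sums converge to the mass
  have hpartial : ∀ s ∈ Set.Icc (0:ℝ) T,
      Filter.Tendsto (fun n => ∑ i ∈ Finset.Icc 1 n, (Nat.cast i : ℝ) * w i s)
        Filter.atTop (nhds (∑' i : ℕ, (Nat.cast i : ℝ) * w i s)) := by
    intro s hs
    have h1 := (hM1 s hs).hasSum.tendsto_sum_nat
    have h2 : ∀ n : ℕ, ∑ i ∈ Finset.Icc 1 n, (Nat.cast i : ℝ) * w i s
        = ∑ i ∈ Finset.range (n+1), (Nat.cast i : ℝ) * w i s := by
      intro n
      refine Finset.sum_subset (fun i hi => ?_) (fun i hi hni => ?_)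
      · simp only [Finset.mem_Icc] at hi; simp only [Finset.mem_range]; omega
      · simp only [Finset.mem_range] at hi
        simp only [Finset.mem_Icc] at hni
        have : i = 0 := by omega
        subst this
        simp
    have h3 := h1.comp (Filter.tendsto_add_atTop_nat 1)
    exact Filter.Tendsto.congr (fun n => (h2 n).symm) h3
  -- conclusion
  have hdiff : Filter.Tendsto (fun n => (∑ i ∈ Finset.Icc 1 n, (Nat.cast i : ℝ) * w i t)
      - (∑ i ∈ Finset.Icc 1 n, (Nat.cast i : ℝ) * w i 0)) Filter.atTop
      (nhds ((∑' i : ℕ, (Nat.cast i : ℝ) * w i t) - ∑' i : ℕ, (Nat.cast i : ℝ) * w i 0)) :=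
    (hpartial t ht).sub (hpartial 0 h0T)
  have hzero : Filter.Tendsto (fun n => (∑ i ∈ Finset.Icc 1 n, (Nat.cast i : ℝ) * w i t)
      - (∑ i ∈ Finset.Icc 1 n, (Nat.cast i : ℝ) * w i 0)) Filter.atTop (nhds 0) :=
    Filter.Tendsto.congr (fun n => hfund n) hint
  have := tendsto_nhds_unique hdiff hzero
  linarith [this]
end

section
/- Fix β ∈ (1,2], q > 1, T ∈ (0,∞), and constants A > 0, α_0 > 0. Assume 0 ≤ a_{i,j} = a_{j,i} ≤ A(i+j), 0 ≤ p_{i,j} = p_{j,i} ≤ 1, and N_{i,j}^s = N_{j,i}^s ≥ 0 with ∑_{s=1}^{i+j−1} s N_{i,j}^s = i+j and N_{i,j}^s ≤ α_0. Let the nonnegative initial data w^0 = (w_i^0)_{i≥1} satisfy ∑_{i≥1} i^β w_i^0 < ∞ and ∑_{i=1}^{∞} i^q w_i^0 < ∞, and let w be the classical solution of the discrete coagulation equations with collisional breakage constructed as the limit of the zero-extended truncated solutions. Then, with ȷ_q > 0 the constant (depending only on q) for which (i+j)((i+j)^q − i^q − j^q) ≤ ȷ_q (i j^q + i^q j) for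 all i,j ≥ 1, and ‖w^0‖ = ∑_{i≥1} i^β w_i^0, the q-th moment propagates: ∑_{i=1}^{∞} i^q w_i(t) ≤ exp(A ȷ_q ‖w^0‖ t) ∑_{i=1}^{∞} i^q w_i^0 for all t ∈ [0,T]; in particular sup_{t∈[0,T]} ∑_{i=1}^{∞} i^q w_i(t) < ∞. -/
/-- The right-hand side of the truncated discrete coagulation equations with
collisional breakage. -/
noncomputable def truncRHS (a p : ℕ → ℕ → ℝ) (N : ℕ → ℕ → ℕ → ℝ) (n i : ℕ)
    (w : ℕ → ℝ) : ℝ :=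
    (1/2) * ∑ j ∈ Finset.Icc 1 (i-1), p j (i-j) * a j (i-j) * w j * w (i-j)
  - ∑ j ∈ Finset.Icc 1 (n-i), a i j * w i * w j
  + (1/2) * ∑ j ∈ Finset.Icc (i+1) n, ∑ k ∈ Finset.Icc 1 (j-1),
      N (j-k) k i * (1 - p (j-k) k) * a (j-k) k * w (j-k) * w k

def pairSet (n : ℕ) : Finset (ℕ × ℕ) :=
  (Finset.Icc 1 n ×ˢ Finset.Icc 1 n).filter (fun x => x.1 + x.2 ≤ n)

lemma mem_pairSet {n : ℕ} {x : ℕ × ℕ} :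
    x ∈ pairSet n ↔ 1 ≤ x.1 ∧ 1 ≤ x.2 ∧ x.1 + x.2 ≤ n := by
  simp only [pairSet, Finset.mem_filter, Finset.mem_product, Finset.mem_Icc]
  omega

lemma loss_reindex (n : ℕ) (f : ℕ → ℕ → ℝ) :
    ∑ i ∈ Finset.Icc 1 n, ∑ j ∈ Finset.Icc 1 (n-i), f i j = ∑ x ∈ pairSet n, f x.1 x.2 := by
  refine (Finset.sum_finset_product' _ _ _ ?_).symm
  rintro ⟨i, j⟩
  simp only [mem_pairSet, Finset.mem_Icc]
  omega

lemma gain_reindex (n : ℕ) (F : ℕ → ℕ → ℝ) (f : ℕ → ℕ → ℝ)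
    (h : ∀ i j, 1 ≤ j → j ≤ i - 1 → 1 ≤ i → i ≤ n → F i j = f j (i - j)) :
    ∑ i ∈ Finset.Icc 1 n, ∑ j ∈ Finset.Icc 1 (i-1), F i j = ∑ x ∈ pairSet n, f x.1 x.2 := by
  have e1 : ∑ i ∈ Finset.Icc 1 n, ∑ j ∈ Finset.Icc 1 (i-1), F i j
      = ∑ x ∈ (Finset.Icc 1 n ×ˢ Finset.Icc 1 n).filter
          (fun x : ℕ × ℕ => 1 ≤ x.2 ∧ x.2 ≤ x.1 - 1), F x.1 x.2 := by
    refine (Finset.sum_finset_product' _ _ _ ?_).symm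
    rintro ⟨i, j⟩
    simp only [Finset.mem_filter, Finset.mem_product, Finset.mem_Icc]
    omega
  rw [e1]
  refine Finset.sum_nbij' (fun x => (x.2, x.1 - x.2)) (fun x => (x.1 + x.2, x.1))
    ?_ ?_ ?_ ?_ ?_
  · rintro ⟨i, j⟩ hx
    simp only [Finset.mem_filter, Finset.mem_product, Finset.mem_Icc] at hx
    simp only [mem_pairSet]
    omega
  · rintro ⟨u, v⟩ hx
    simp only [mem_pairSet] at hx
    simp only [Finset.mem_filter, Finset.mem_product, Finset.mem_Icc]
    omega
  · rintro ⟨i, j⟩ hx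
    simp only [Finset.mem_filter, Finset.mem_product, Finset.mem_Icc] at hx
    simp only [Prod.mk.injEq, and_true, true_and]
    try omega
  · rintro ⟨u, v⟩ hx
    simp only [mem_pairSet] at hx
    simp only [Prod.mk.injEq, and_true, true_and]
    try omega
  · rintro ⟨i, j⟩ hx
    simp only [Finset.mem_filter, Finset.mem_product, Finset.mem_Icc] at hx
    exact h i j (by omega) (by omega) (by omega) (by omega)

lemma break_reindex (n : ℕ) (F : ℕ → ℕ → ℕ → ℝ) (f : ℕ → ℕ → ℕ → ℝ)
    (h : ∀ i j k, 1 ≤ i → i + 1 ≤ j → j ≤ n → 1 ≤ k → k ≤ j - 1 →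
      F i j k = f (j - k) k i) :
    ∑ i ∈ Finset.Icc 1 n, ∑ j ∈ Finset.Icc (i+1) n, ∑ k ∈ Finset.Icc 1 (j-1), F i j k
    = ∑ x ∈ pairSet n, ∑ s ∈ Finset.Icc 1 (x.1 + x.2 - 1), f x.1 x.2 s := by
  have e0 : ∑ i ∈ Finset.Icc 1 n, ∑ j ∈ Finset.Icc (i+1) n, ∑ k ∈ Finset.Icc 1 (j-1), F i j k
      = ∑ y ∈ (Finset.Icc 1 n ×ˢ Finset.Icc 1 n).filter
          (fun y : ℕ × ℕ => y.1 + 1 ≤ y.2), ∑ k ∈ Finset.Icc 1 (y.2 - 1), F y.1 y.2 k := by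
    refine (Finset.sum_finset_product' _ _ _ ?_).symm
    rintro ⟨i, j⟩
    simp only [Finset.mem_filter, Finset.mem_product, Finset.mem_Icc]
    omega
  have e1 : ∑ y ∈ (Finset.Icc 1 n ×ˢ Finset.Icc 1 n).filter
          (fun y : ℕ × ℕ => y.1 + 1 ≤ y.2), ∑ k ∈ Finset.Icc 1 (y.2 - 1), F y.1 y.2 k
      = ∑ z ∈ (((Finset.Icc 1 n ×ˢ Finset.Icc 1 n).filter
          (fun y : ℕ × ℕ => y.1 + 1 ≤ y.2)) ×ˢ Finset.Icc 1 n).filter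
          (fun z : (ℕ × ℕ) × ℕ => 1 ≤ z.2 ∧ z.2 ≤ z.1.2 - 1),
          F z.1.1 z.1.2 z.2 := by
    refine (Finset.sum_finset_product' _ _ _ ?_).symm
    rintro ⟨⟨i, j⟩, k⟩
    simp only [Finset.mem_filter, Finset.mem_product, Finset.mem_Icc]
    omega
  have e2 : ∑ x ∈ pairSet n, ∑ s ∈ Finset.Icc 1 (x.1 + x.2 - 1), f x.1 x.2 s
      = ∑ z ∈ (pairSet n ×ˢ Finset.Icc 1 n).filter
          (fun z : (ℕ × ℕ) × ℕ => 1 ≤ z.2 ∧ z.2 ≤ z.1.1 + z.1.2 - 1),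
          f z.1.1 z.1.2 z.2 := by
    refine (Finset.sum_finset_product' _ _ _ ?_).symm
    rintro ⟨⟨u, v⟩, s⟩
    simp only [Finset.mem_filter, Finset.mem_product, Finset.mem_Icc, mem_pairSet]
    omega
  rw [e0, e1, e2]
  refine Finset.sum_nbij' (fun z => ((z.1.2 - z.2, z.2), z.1.1))
    (fun z => ((z.2, z.1.1 + z.1.2), z.1.2)) ?_ ?_ ?_ ?_ ?_
  · rintro ⟨⟨i, j⟩, k⟩ hz
    simp only [Finset.mem_filter, Finset.mem_product, Finset.mem_Icc] at hz
    simp only [Finset.mem_filter, Finset.mem_product, Finset.mem_Icc, mem_pairSet]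
    omega
  · rintro ⟨⟨u, v⟩, s⟩ hz
    simp only [Finset.mem_filter, Finset.mem_product, Finset.mem_Icc, mem_pairSet] at hz
    simp only [Finset.mem_filter, Finset.mem_product, Finset.mem_Icc]
    omega
  · rintro ⟨⟨i, j⟩, k⟩ hz
    simp only [Finset.mem_filter, Finset.mem_product, Finset.mem_Icc] at hz
    simp only [Prod.mk.injEq, and_true, true_and]
    try omega
  · rintro ⟨⟨u, v⟩, s⟩ hz
    simp only [Finset.mem_filter, Finset.mem_product, Finset.mem_Icc, mem_pairSet] at hz
    simp only [Prod.mk.injEq, and_true, true_and]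
    try omega
  · rintro ⟨⟨i, j⟩, k⟩ hz
    simp only [Finset.mem_filter, Finset.mem_product, Finset.mem_Icc] at hz
    exact h i j k (by omega) (by omega) (by omega) (by omega) (by omega)

lemma pair_swap (n : ℕ) (f : ℕ → ℕ → ℝ) :
    ∑ x ∈ pairSet n, f x.1 x.2 = ∑ x ∈ pairSet n, f x.2 x.1 := by
  refine Finset.sum_nbij' Prod.swap Prod.swap ?_ ?_ ?_ ?_ ?_
  · rintro ⟨u, v⟩ hx
    simp only [mem_pairSet, Prod.swap_prod_mk] at *
    omega
  · rintro ⟨u, v⟩ hx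
    simp only [mem_pairSet, Prod.swap_prod_mk] at *
    omega
  · rintro ⟨u, v⟩ _; rfl
  · rintro ⟨u, v⟩ _; rfl
  · rintro ⟨u, v⟩ _; rfl

lemma trunc_sum_eq (a p : ℕ → ℕ → ℝ) (N : ℕ → ℕ → ℕ → ℝ)
    (ha_symm : ∀ i j, a i j = a j i) (n : ℕ) (c w : ℕ → ℝ) :
    ∑ i ∈ Finset.Icc 1 n, c i * truncRHS a p N n i w
    = (1/2) * ∑ x ∈ pairSet n, a x.1 x.2 * w x.1 * w x.2 *
        (p x.1 x.2 * c (x.1 + x.2) - (c x.1 + c x.2)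
          + (1 - p x.1 x.2) * ∑ s ∈ Finset.Icc 1 (x.1 + x.2 - 1), c s * N x.1 x.2 s) := by
  have split : ∑ i ∈ Finset.Icc 1 n, c i * truncRHS a p N n i w
      = ∑ i ∈ Finset.Icc 1 n, ((1/2) * (c i * ∑ j ∈ Finset.Icc 1 (i-1),
            p j (i-j) * a j (i-j) * w j * w (i-j)))
        - ∑ i ∈ Finset.Icc 1 n, (c i * ∑ j ∈ Finset.Icc 1 (n-i), a i j * w i * w j)
        + ∑ i ∈ Finset.Icc 1 n, ((1/2) * (c i * ∑ j ∈ Finset.Icc (i+1) n,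
            ∑ k ∈ Finset.Icc 1 (j-1),
            N (j-k) k i * (1 - p (j-k) k) * a (j-k) k * w (j-k) * w k)) := by
    rw [← Finset.sum_sub_distrib, ← Finset.sum_add_distrib]
    refine Finset.sum_congr rfl fun i _ => ?_
    unfold truncRHS
    ring
  rw [split]
  have hg : ∑ i ∈ Finset.Icc 1 n, ((1/2) * (c i * ∑ j ∈ Finset.Icc 1 (i-1),
        p j (i-j) * a j (i-j) * w j * w (i-j)))
      = ∑ x ∈ pairSet n,
          (1/2) * (c (x.1 + x.2) * (p x.1 x.2 * a x.1 x.2 * w x.1 * w x.2)) := by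
    simp only [Finset.mul_sum]
    refine gain_reindex n _
      (fun u v => 1/2 * (c (u + v) * (p u v * a u v * w u * w v))) ?_
    intro i j h1 h2 h3 h4
    rw [show j + (i - j) = i by omega]
  have hb : ∑ i ∈ Finset.Icc 1 n, ((1/2) * (c i * ∑ j ∈ Finset.Icc (i+1) n,
        ∑ k ∈ Finset.Icc 1 (j-1), N (j-k) k i * (1 - p (j-k) k) * a (j-k) k * w (j-k) * w k))
      = ∑ x ∈ pairSet n, ∑ s ∈ Finset.Icc 1 (x.1 + x.2 - 1),
          (1/2) * (c s * (N x.1 x.2 s * (1 - p x.1 x.2) * a x.1 x.2 * w x.1 * w x.2)) := by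
    simp only [Finset.mul_sum]
    refine break_reindex n _
      (fun u v s => 1/2 * (c s * (N u v s * (1 - p u v) * a u v * w u * w v))) ?_
    intro i j k h1 h2 h3 h4 h5
    rfl
  have hl : ∑ i ∈ Finset.Icc 1 n, (c i * ∑ j ∈ Finset.Icc 1 (n-i), a i j * w i * w j)
      = ∑ x ∈ pairSet n, ((1/2) * ((a x.1 x.2 * w x.1 * w x.2) * (c x.1 + c x.2))) := by
    simp only [Finset.mul_sum]
    rw [loss_reindex n (fun u v => c u * (a u v * w u * w v))]
    have h2 := pair_swap n (fun u v => c u * (a u v * w u * w v))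
    have key : (2:ℝ) * ∑ x ∈ pairSet n, c x.1 * (a x.1 x.2 * w x.1 * w x.2)
        = ∑ x ∈ pairSet n, (2:ℝ) * ((1/2) * ((a x.1 x.2 * w x.1 * w x.2) * (c x.1 + c x.2))) := by
      rw [two_mul]
      nth_rewrite 2 [h2]
      rw [← Finset.sum_add_distrib]
      refine Finset.sum_congr rfl fun x _ => ?_
      rw [ha_symm x.2 x.1]
      ring
    rw [← Finset.mul_sum] at key
    linarith
  rw [hg, hb, hl, Finset.mul_sum]
  rw [← Finset.sum_sub_distrib, ← Finset.sum_add_distrib]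
  refine Finset.sum_congr rfl fun x _ => ?_
  rw [show ∑ s ∈ Finset.Icc 1 (x.1 + x.2 - 1),
        (1/2) * (c s * (N x.1 x.2 s * (1 - p x.1 x.2) * a x.1 x.2 * w x.1 * w x.2))
      = ((1/2) * (a x.1 x.2 * w x.1 * w x.2 * (1 - p x.1 x.2))) *
          ∑ s ∈ Finset.Icc 1 (x.1 + x.2 - 1), c s * N x.1 x.2 s by
    rw [Finset.mul_sum]; exact Finset.sum_congr rfl fun s _ => by ring]
  ring

lemma rpow_split (q : ℝ) (x : ℝ) (hx : 0 < x) : x ^ q = x * x ^ (q - 1) := by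
  nth_rewrite 1 [show q = 1 + (q - 1) by ring]
  rw [Real.rpow_add hx, Real.rpow_one]

lemma rpow_superadd (q : ℝ) (hq : 1 ≤ q) (u v : ℝ) (hu : 1 ≤ u) (hv : 1 ≤ v) :
    u ^ q + v ^ q ≤ (u + v) ^ q := by
  have hu0 : (0:ℝ) < u := by linarith
  have hv0 : (0:ℝ) < v := by linarith
  have huv : (0:ℝ) < u + v := by linarith
  have h1 : u ^ (q-1) ≤ (u+v) ^ (q-1) := Real.rpow_le_rpow hu0.le (by linarith) (by linarith)
  have h2 : v ^ (q-1) ≤ (u+v) ^ (q-1) := Real.rpow_le_rpow hv0.le (by linarith) (by linarith)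
  rw [rpow_split q u hu0, rpow_split q v hv0, rpow_split q (u+v) huv]
  nlinarith [h1, h2]

lemma inner_bound (q : ℝ) (hq : 1 ≤ q) (i j : ℕ) (hi : 1 ≤ i) (hj : 1 ≤ j)
    (M : ℕ → ℝ) (hM0 : ∀ s, 0 ≤ M s)
    (hmass : ∑ s ∈ Finset.Icc 1 (i+j-1), (s:ℝ) * M s = (i:ℝ) + (j:ℝ)) :
    ∑ s ∈ Finset.Icc 1 (i+j-1), ((s:ℝ)) ^ q * M s ≤ ((i:ℝ) + (j:ℝ)) ^ q := by
  have hij1 : (1:ℝ) ≤ ((i+j-1 : ℕ):ℝ) := by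
    have : 1 ≤ i + j - 1 := by omega
    exact_mod_cast this
  have step1 : ∑ s ∈ Finset.Icc 1 (i+j-1), ((s:ℝ)) ^ q * M s
      ≤ ∑ s ∈ Finset.Icc 1 (i+j-1), ((i+j-1:ℕ):ℝ) ^ (q-1) * ((s:ℝ) * M s) := by
    refine Finset.sum_le_sum fun s hs => ?_
    simp only [Finset.mem_Icc] at hs
    have hs0 : (0:ℝ) < (s:ℝ) := by exact_mod_cast hs.1
    have hsle : ((s:ℝ)) ≤ ((i+j-1:ℕ):ℝ) := by exact_mod_cast hs.2
    have h1 : ((s:ℝ)) ^ q ≤ (s:ℝ) * ((i+j-1:ℕ):ℝ) ^ (q-1) := by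
      rw [rpow_split q _ hs0]
      exact mul_le_mul_of_nonneg_left
        (Real.rpow_le_rpow hs0.le hsle (by linarith)) hs0.le
    calc ((s:ℝ)) ^ q * M s ≤ ((s:ℝ) * ((i+j-1:ℕ):ℝ) ^ (q-1)) * M s :=
          mul_le_mul_of_nonneg_right h1 (hM0 s)
      _ = ((i+j-1:ℕ):ℝ) ^ (q-1) * ((s:ℝ) * M s) := by ring
  rw [← Finset.mul_sum, hmass] at step1
  have hij0 : (0:ℝ) < (i:ℝ) + (j:ℝ) := by
    have : (1:ℝ) ≤ (i:ℝ) := by exact_mod_cast hi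
    have : (1:ℝ) ≤ (j:ℝ) := by exact_mod_cast hj
    linarith
  have hle : ((i+j-1:ℕ):ℝ) ≤ (i:ℝ) + (j:ℝ) := by
    have h1 : ((i+j-1:ℕ):ℝ) ≤ ((i+j:ℕ):ℝ) := by exact_mod_cast Nat.sub_le _ _
    have h2 : ((i+j:ℕ):ℝ) = (i:ℝ) + (j:ℝ) := by push_cast; ring
    linarith
  have h3 : ((i+j-1:ℕ):ℝ) ^ (q-1) ≤ ((i:ℝ) + (j:ℝ)) ^ (q-1) :=
    Real.rpow_le_rpow (by positivity) hle (by linarith)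
  have h4 : ((i+j-1:ℕ):ℝ) ^ (q-1) * ((i:ℝ) + (j:ℝ)) ≤ ((i:ℝ) + (j:ℝ)) ^ (q-1) * ((i:ℝ) + (j:ℝ)) :=
    mul_le_mul_of_nonneg_right h3 hij0.le
  have h5 : ((i:ℝ) + (j:ℝ)) ^ q = ((i:ℝ) + (j:ℝ)) * ((i:ℝ) + (j:ℝ)) ^ (q-1) :=
    rpow_split q _ hij0
  linarith

lemma mass_sum_zero (a p : ℕ → ℕ → ℝ) (N : ℕ → ℕ → ℕ → ℝ)
    (ha_symm : ∀ i j, a i j = a j i)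
    (hN_mass : ∀ i j, 1 ≤ i → 1 ≤ j →
      ∑ s ∈ Finset.Icc 1 (i+j-1), (Nat.cast s : ℝ) * N i j s = (i : ℝ) + (j : ℝ))
    (n : ℕ) (w : ℕ → ℝ) :
    ∑ i ∈ Finset.Icc 1 n, (i:ℝ) * truncRHS a p N n i w = 0 := by
  rw [trunc_sum_eq a p N ha_symm n (fun i => (i:ℝ)) w]
  rw [Finset.sum_eq_zero, mul_zero]
  intro x hx
  rw [mem_pairSet] at hx
  rw [hN_mass x.1 x.2 hx.1 hx.2.1]
  have : ((x.1 + x.2 : ℕ) : ℝ) = (x.1 : ℝ) + (x.2 : ℝ) := by push_cast; ring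
  rw [this]
  ring

lemma moment_sum_bound (q A jq : ℝ) (hq : 1 < q) (hA : 0 < A) (hjq : 0 < jq)
    (a p : ℕ → ℕ → ℝ) (N : ℕ → ℕ → ℕ → ℝ)
    (ha_nonneg : ∀ i j, 0 ≤ a i j) (ha_symm : ∀ i j, a i j = a j i)
    (ha_bound : ∀ i j, 1 ≤ i → 1 ≤ j → a i j ≤ A * ((i : ℝ) + (j : ℝ)))
    (hp_nonneg : ∀ i j, 0 ≤ p i j) (hp_le : ∀ i j, p i j ≤ 1)
    (hN_nonneg : ∀ i j s, 0 ≤ N i j s)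
    (hN_mass : ∀ i j, 1 ≤ i → 1 ≤ j →
      ∑ s ∈ Finset.Icc 1 (i+j-1), (Nat.cast s : ℝ) * N i j s = (i : ℝ) + (j : ℝ))
    (hjq_ineq : ∀ i j : ℕ, 1 ≤ i → 1 ≤ j →
      ((i : ℝ) + (j : ℝ)) * (((i : ℝ) + (j : ℝ)) ^ q - (i : ℝ) ^ q - (j : ℝ) ^ q)
        ≤ jq * ((i : ℝ) * (j : ℝ) ^ q + (i : ℝ) ^ q * (j : ℝ)))
    (n : ℕ) (w : ℕ → ℝ) (hw : ∀ i, 1 ≤ i → i ≤ n → 0 ≤ w i) :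
    ∑ i ∈ Finset.Icc 1 n, (i:ℝ) ^ q * truncRHS a p N n i w
    ≤ A * jq * (∑ i ∈ Finset.Icc 1 n, (i:ℝ) * w i)
        * (∑ i ∈ Finset.Icc 1 n, (i:ℝ) ^ q * w i) := by
  rw [trunc_sum_eq a p N ha_symm n (fun i => (i:ℝ) ^ q) w]
  have hstep : ∀ x ∈ pairSet n,
      a x.1 x.2 * w x.1 * w x.2 *
        (p x.1 x.2 * ((x.1 + x.2 : ℕ):ℝ) ^ q - ((x.1:ℝ) ^ q + (x.2:ℝ) ^ q)
          + (1 - p x.1 x.2) * ∑ s ∈ Finset.Icc 1 (x.1 + x.2 - 1), (s:ℝ) ^ q * N x.1 x.2 s)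
      ≤ A * jq * ((x.1:ℝ) * (x.2:ℝ) ^ q + (x.1:ℝ) ^ q * (x.2:ℝ)) * w x.1 * w x.2 := by
    rintro ⟨u, v⟩ hx
    rw [mem_pairSet] at hx
    obtain ⟨hu, hv, huvn⟩ := hx
    dsimp only at *
    have hU : (1:ℝ) ≤ (u:ℝ) := by exact_mod_cast hu
    have hV : (1:ℝ) ≤ (v:ℝ) := by exact_mod_cast hv
    have hw1 : 0 ≤ w u := hw u hu (by omega)
    have hw2 : 0 ≤ w v := hw v hv (by omega)
    have hcast : ((u + v : ℕ):ℝ) = (u:ℝ) + (v:ℝ) := by push_cast; ring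
    set U := (u:ℝ); set V := (v:ℝ)
    have hS : ∑ s ∈ Finset.Icc 1 (u + v - 1), (s:ℝ) ^ q * N u v s ≤ (U + V) ^ q :=
      inner_bound q hq.le u v hu hv (fun s => N u v s) (fun s => hN_nonneg u v s)
        (hN_mass u v hu hv)
    have hsup : U ^ q + V ^ q ≤ (U + V) ^ q := rpow_superadd q hq.le U V hU hV
    have hp0 : 0 ≤ p u v := hp_nonneg u v
    have hp1 : p u v ≤ 1 := hp_le u v
    set S := ∑ s ∈ Finset.Icc 1 (u + v - 1), (s:ℝ) ^ q * N u v s with hSdef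
    set Δ := (U + V) ^ q - U ^ q - V ^ q with hΔ
    have hΔ0 : 0 ≤ Δ := by simp only [hΔ]; linarith
    have hbr : p u v * ((u + v : ℕ):ℝ) ^ q - (U ^ q + V ^ q) + (1 - p u v) * S ≤ Δ := by
      rw [hcast]
      have h1 : (1 - p u v) * S ≤ (1 - p u v) * (U + V) ^ q :=
        mul_le_mul_of_nonneg_left hS (by linarith)
      simp only [hΔ]
      nlinarith [h1]
    have haww : 0 ≤ a u v * w u * w v :=
      mul_nonneg (mul_nonneg (ha_nonneg u v) hw1) hw2
    have t1 : a u v * w u * w v *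
        (p u v * ((u + v : ℕ):ℝ) ^ q - (U ^ q + V ^ q) + (1 - p u v) * S)
        ≤ a u v * w u * w v * Δ := mul_le_mul_of_nonneg_left hbr haww
    have t2 : a u v * w u * w v * Δ ≤ A * (U + V) * w u * w v * Δ := by
      have := mul_le_mul_of_nonneg_right (ha_bound u v hu hv)
        (mul_nonneg (mul_nonneg hw1 hw2) hΔ0)
      nlinarith [this]
    have t3 : A * (U + V) * w u * w v * Δ
        ≤ A * jq * (U * V ^ q + U ^ q * V) * w u * w v := by
      have h := hjq_ineq u v hu hv
      have h2 := mul_le_mul_of_nonneg_left h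
        (mul_nonneg (mul_nonneg hA.le hw1) hw2 : 0 ≤ A * w u * w v)
      simp only [hΔ]
      nlinarith [h2]
    calc a u v * w u * w v *
        (p u v * ((u + v : ℕ):ℝ) ^ q - (U ^ q + V ^ q) + (1 - p u v) * S)
        ≤ a u v * w u * w v * Δ := t1
      _ ≤ A * (U + V) * w u * w v * Δ := t2
      _ ≤ A * jq * (U * V ^ q + U ^ q * V) * w u * w v := t3
  have step2 : ∑ x ∈ pairSet n, a x.1 x.2 * w x.1 * w x.2 *
        (p x.1 x.2 * ((x.1 + x.2 : ℕ):ℝ) ^ q - ((x.1:ℝ) ^ q + (x.2:ℝ) ^ q)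
          + (1 - p x.1 x.2) * ∑ s ∈ Finset.Icc 1 (x.1 + x.2 - 1), (s:ℝ) ^ q * N x.1 x.2 s)
      ≤ ∑ x ∈ Finset.Icc 1 n ×ˢ Finset.Icc 1 n,
          A * jq * ((x.1:ℝ) * (x.2:ℝ) ^ q + (x.1:ℝ) ^ q * (x.2:ℝ)) * w x.1 * w x.2 := by
    refine le_trans (Finset.sum_le_sum hstep) ?_
    refine Finset.sum_le_sum_of_subset_of_nonneg (Finset.filter_subset _ _) ?_
    rintro ⟨u, v⟩ hx _
    simp only [Finset.mem_product, Finset.mem_Icc] at hx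
    have hw1 : 0 ≤ w u := hw u hx.1.1 hx.1.2
    have hw2 : 0 ≤ w v := hw v hx.2.1 hx.2.2
    have hU : (0:ℝ) ≤ (u:ℝ) := by positivity
    have hV : (0:ℝ) ≤ (v:ℝ) := by positivity
    have : (0:ℝ) ≤ (u:ℝ) * (v:ℝ) ^ q + (u:ℝ) ^ q * (v:ℝ) := by positivity
    positivity
  have step3 : ∑ x ∈ Finset.Icc 1 n ×ˢ Finset.Icc 1 n,
        A * jq * ((x.1:ℝ) * (x.2:ℝ) ^ q + (x.1:ℝ) ^ q * (x.2:ℝ)) * w x.1 * w x.2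
      = 2 * (A * jq * (∑ i ∈ Finset.Icc 1 n, (i:ℝ) * w i)
          * (∑ i ∈ Finset.Icc 1 n, (i:ℝ) ^ q * w i)) := by
    rw [Finset.sum_product]
    have e1 : (∑ i ∈ Finset.Icc 1 n, (i:ℝ) * w i)
        * (∑ i ∈ Finset.Icc 1 n, (i:ℝ) ^ q * w i)
        = ∑ i ∈ Finset.Icc 1 n, ∑ j ∈ Finset.Icc 1 n, ((i:ℝ) * w i) * ((j:ℝ) ^ q * w j) :=
      Finset.sum_mul_sum _ _ _ _
    have e2 : (∑ i ∈ Finset.Icc 1 n, (i:ℝ) ^ q * w i)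
        * (∑ i ∈ Finset.Icc 1 n, (i:ℝ) * w i)
        = ∑ i ∈ Finset.Icc 1 n, ∑ j ∈ Finset.Icc 1 n, ((i:ℝ) ^ q * w i) * ((j:ℝ) * w j) :=
      Finset.sum_mul_sum _ _ _ _
    have e3 : ∀ X Y : ℝ, 2 * (A * jq * X * Y) = A * jq * (X * Y) + A * jq * (Y * X) := by
      intros; ring
    rw [e3, e1, e2, Finset.mul_sum, Finset.mul_sum, ← Finset.sum_add_distrib]
    refine Finset.sum_congr rfl fun i _ => ?_
    rw [Finset.mul_sum, Finset.mul_sum, ← Finset.sum_add_distrib]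
    refine Finset.sum_congr rfl fun j _ => ?_
    ring
  calc (1/2) * ∑ x ∈ pairSet n, a x.1 x.2 * w x.1 * w x.2 *
        (p x.1 x.2 * ((x.1 + x.2 : ℕ):ℝ) ^ q - ((x.1:ℝ) ^ q + (x.2:ℝ) ^ q)
          + (1 - p x.1 x.2) * ∑ s ∈ Finset.Icc 1 (x.1 + x.2 - 1), (s:ℝ) ^ q * N x.1 x.2 s)
      ≤ (1/2) * (2 * (A * jq * (∑ i ∈ Finset.Icc 1 n, (i:ℝ) * w i)
          * (∑ i ∈ Finset.Icc 1 n, (i:ℝ) ^ q * w i))) := by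
        rw [← step3]
        exact mul_le_mul_of_nonneg_left step2 (by norm_num)
    _ = A * jq * (∑ i ∈ Finset.Icc 1 n, (i:ℝ) * w i)
          * (∑ i ∈ Finset.Icc 1 n, (i:ℝ) ^ q * w i) := by ring


/-- Propagation of moments: if the initial data additionally has finite `q`-th
moment for some `q > 1`, then the classical solution constructed as the limit of
the truncated solutions satisfies
`∑_{i≥1} i^q wᵢ(t) ≤ exp(A ȷ_q ‖w⁰‖ t) ∑_{i≥1} i^q wᵢ⁰` on `[0, T]`;
in particular its `q`-th moment stays finite on `[0, T]`. -/
theorem propagation_of_moments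
    (T : ℝ) (hT : 0 < T) (β q : ℝ) (hβ1 : 1 < β) (hβ2 : β ≤ 2) (hq : 1 < q)
    (A α₀ : ℝ) (hA : 0 < A) (hα₀ : 0 < α₀)
    (a p : ℕ → ℕ → ℝ) (N : ℕ → ℕ → ℕ → ℝ)
    (ha_nonneg : ∀ i j, 0 ≤ a i j) (ha_symm : ∀ i j, a i j = a j i)
    (ha_bound : ∀ i j, 1 ≤ i → 1 ≤ j → a i j ≤ A * ((i : ℝ) + (j : ℝ)))
    (hp_nonneg : ∀ i j, 0 ≤ p i j) (hp_symm : ∀ i j, p i j = p j i)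
    (hp_le : ∀ i j, p i j ≤ 1)
    (hN_nonneg : ∀ i j s, 0 ≤ N i j s) (hN_symm : ∀ i j s, N i j s = N j i s)
    (hN_bound : ∀ i j s, 1 ≤ i → 1 ≤ j → s ∈ Finset.Icc 1 (i+j-1) → N i j s ≤ α₀)
    (hN_mass : ∀ i j, 1 ≤ i → 1 ≤ j →
      ∑ s ∈ Finset.Icc 1 (i+j-1), (Nat.cast s : ℝ) * N i j s = (i : ℝ) + (j : ℝ))
    (w0 : ℕ → ℝ) (hw0_nonneg : ∀ i, 1 ≤ i → 0 ≤ w0 i)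
    (hw0_momβ : Summable (fun i : ℕ => (Nat.cast i : ℝ) ^ β * w0 i))
    (hw0_momq : Summable (fun i : ℕ => (Nat.cast i : ℝ) ^ q * w0 i))
    (norm0 : ℝ) (hnorm0 : norm0 = ∑' i : ℕ, (Nat.cast i : ℝ) ^ β * w0 i)
    (wtr : ℕ → ℕ → ℝ → ℝ)
    (hwtr_nonneg : ∀ n, 2 ≤ n → ∀ i ∈ Finset.Icc 1 n, ∀ t ∈ Set.Icc (0:ℝ) T,
      0 ≤ wtr n i t)
    (hwtr_init : ∀ n, 2 ≤ n → ∀ i ∈ Finset.Icc 1 n, wtr n i 0 = w0 i)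
    (hwtr_ode : ∀ n, 2 ≤ n → ∀ i ∈ Finset.Icc 1 n, ∀ t ∈ Set.Icc (0:ℝ) T,
      HasDerivWithinAt (wtr n i) (truncRHS a p N n i (fun j => wtr n j t))
        (Set.Icc 0 T) t)
    (hwtr_ext : ∀ n, 2 ≤ n → ∀ i, n < i → ∀ t : ℝ, wtr n i t = 0)
    (w : ℕ → ℝ → ℝ)
    (hw : IsCoagBreakSol a p N T w)
    (hw_init : ∀ i, 1 ≤ i → w i 0 = w0 i)
    (hw_lim : ∀ i, 1 ≤ i → ∀ t ∈ Set.Icc (0:ℝ) T,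
      Filter.Tendsto (fun n => wtr n i t) Filter.atTop (nhds (w i t)))
    (jq : ℝ) (hjq : 0 < jq)
    (hjq_ineq : ∀ i j : ℕ, 1 ≤ i → 1 ≤ j →
      ((i : ℝ) + (j : ℝ)) * (((i : ℝ) + (j : ℝ)) ^ q - (i : ℝ) ^ q - (j : ℝ) ^ q)
        ≤ jq * ((i : ℝ) * (j : ℝ) ^ q + (i : ℝ) ^ q * (j : ℝ))) :
    ∀ t ∈ Set.Icc (0:ℝ) T,
      Summable (fun i : ℕ => (Nat.cast i : ℝ) ^ q * w i t) ∧
      ∑' i : ℕ, (Nat.cast i : ℝ) ^ q * w i t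
        ≤ Real.exp (A * jq * norm0 * t) * ∑' i : ℕ, (Nat.cast i : ℝ) ^ q * w0 i := by

  have hq0 : q ≠ 0 := by linarith
  have hβ0 : β ≠ 0 := by linarith
  set C : ℝ := A * jq * norm0 with hC
  set Q0 : ℝ := ∑' i : ℕ, (Nat.cast i : ℝ) ^ q * w0 i with hQ0
  set Ln : ℕ → ℝ → ℝ := fun n s => ∑ i ∈ Finset.Icc 1 n, (i:ℝ) * wtr n i s with hLn
  set Mn : ℕ → ℝ → ℝ := fun n s => ∑ i ∈ Finset.Icc 1 n, (i:ℝ) ^ q * wtr n i s with hMn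
  -- derivatives
  have hLderiv : ∀ n : ℕ, 2 ≤ n → ∀ s ∈ Set.Icc (0:ℝ) T,
      HasDerivWithinAt (Ln n)
        (∑ i ∈ Finset.Icc 1 n, (i:ℝ) * truncRHS a p N n i (fun j => wtr n j s))
        (Set.Icc 0 T) s := fun n hn s hs =>
    HasDerivWithinAt.fun_sum fun i hi => (hwtr_ode n hn i hi s hs).const_mul _
  have hMderiv : ∀ n : ℕ, 2 ≤ n → ∀ s ∈ Set.Icc (0:ℝ) T,
      HasDerivWithinAt (Mn n)
        (∑ i ∈ Finset.Icc 1 n, (i:ℝ) ^ q * truncRHS a p N n i (fun j => wtr n j s))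
        (Set.Icc 0 T) s := fun n hn s hs =>
    HasDerivWithinAt.fun_sum fun i hi => (hwtr_ode n hn i hi s hs).const_mul _
  -- mass conservation
  have hLconst : ∀ n : ℕ, 2 ≤ n → ∀ s ∈ Set.Icc (0:ℝ) T, Ln n s = Ln n 0 := by
    intro n hn
    refine constant_of_has_deriv_right_zero
      (fun x hx => (hLderiv n hn x hx).continuousWithinAt) ?_
    intro x hx
    have h := hLderiv n hn x (Set.Ico_subset_Icc_self hx)
    rw [mass_sum_zero a p N ha_symm hN_mass n _] at h
    exact h.mono_of_mem_nhdsWithin (Icc_mem_nhdsGE_of_mem hx)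
  -- initial mass bounded by norm0
  have hL0 : ∀ n : ℕ, 2 ≤ n → Ln n 0 ≤ norm0 := by
    intro n hn
    have e1 : Ln n 0 = ∑ i ∈ Finset.Icc 1 n, (i:ℝ) * w0 i := by
      simp only [hLn]
      exact Finset.sum_congr rfl fun i hi => by rw [hwtr_init n hn i hi]
    have e2 : ∑ i ∈ Finset.Icc 1 n, (i:ℝ) * w0 i
        ≤ ∑ i ∈ Finset.Icc 1 n, (i:ℝ) ^ β * w0 i := by
      refine Finset.sum_le_sum fun i hi => ?_
      rw [Finset.mem_Icc] at hi
      refine mul_le_mul_of_nonneg_right ?_ (hw0_nonneg i hi.1)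
      calc (i:ℝ) = (i:ℝ) ^ (1:ℝ) := (Real.rpow_one _).symm
        _ ≤ (i:ℝ) ^ β := Real.rpow_le_rpow_of_exponent_le (by exact_mod_cast hi.1) hβ1.le
    have e3 : ∑ i ∈ Finset.Icc 1 n, (i:ℝ) ^ β * w0 i
        ≤ ∑' i : ℕ, (Nat.cast i : ℝ) ^ β * w0 i := by
      refine Summable.sum_le_tsum _ (fun i hi => ?_) hw0_momβ
      rcases Nat.eq_zero_or_pos i with h0 | h1
      · simp [h0, Real.zero_rpow hβ0]
      · have : 0 ≤ w0 i := hw0_nonneg i h1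
        positivity
    rw [hnorm0]
    linarith
  have hMn_nonneg : ∀ n : ℕ, 2 ≤ n → ∀ s ∈ Set.Icc (0:ℝ) T, 0 ≤ Mn n s := by
    intro n hn s hs
    refine Finset.sum_nonneg fun i hi => ?_
    exact mul_nonneg (Real.rpow_nonneg (Nat.cast_nonneg i) q) (hwtr_nonneg n hn i hi s hs)
  -- derivative bound
  have hDle : ∀ n : ℕ, 2 ≤ n → ∀ s ∈ Set.Icc (0:ℝ) T,
      ∑ i ∈ Finset.Icc 1 n, (i:ℝ) ^ q * truncRHS a p N n i (fun j => wtr n j s)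
        ≤ C * Mn n s := by
    intro n hn s hs
    have h1 := moment_sum_bound q A jq hq hA hjq a p N ha_nonneg ha_symm ha_bound
      hp_nonneg hp_le hN_nonneg hN_mass hjq_ineq n (fun j => wtr n j s)
      (fun i h1 h2 => hwtr_nonneg n hn i (Finset.mem_Icc.2 ⟨h1, h2⟩) s hs)
    have h2 : Ln n s ≤ norm0 := (hLconst n hn s hs).le.trans (hL0 n hn)
    have h3 : 0 ≤ Mn n s := hMn_nonneg n hn s hs
    have h4 : A * jq * Ln n s * Mn n s ≤ A * jq * norm0 * Mn n s := by
      have h5 : A * jq * Ln n s ≤ A * jq * norm0 :=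
        mul_le_mul_of_nonneg_left h2 (by positivity)
      exact mul_le_mul_of_nonneg_right h5 h3
    calc ∑ i ∈ Finset.Icc 1 n, (i:ℝ) ^ q * truncRHS a p N n i (fun j => wtr n j s)
        ≤ A * jq * Ln n s * Mn n s := h1
      _ ≤ A * jq * norm0 * Mn n s := h4
      _ = C * Mn n s := by rw [hC]
  -- Gronwall
  have hkey : ∀ n : ℕ, 2 ≤ n → ∀ s ∈ Set.Icc (0:ℝ) T, Mn n s ≤ Real.exp (C * s) * Mn n 0 := by
    intro n hn s hs
    set g : ℝ → ℝ := fun x => Real.exp (-C * x) * Mn n x with hg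
    have hgderiv : ∀ x ∈ Set.Icc (0:ℝ) T,
        HasDerivWithinAt g
          (Real.exp (-C * x) * (-C) * Mn n x + Real.exp (-C * x) *
            ∑ i ∈ Finset.Icc 1 n, (i:ℝ) ^ q * truncRHS a p N n i (fun j => wtr n j x))
          (Set.Icc 0 T) x := by
      intro x hx
      have he : HasDerivAt (fun y => Real.exp (-C * y)) (Real.exp (-C * x) * (-C)) x := by
        have h1 : HasDerivAt (fun y : ℝ => -C * y) (-C) x := by
          simpa using (hasDerivAt_id x).const_mul (-C)
        exact h1.exp
      exact he.hasDerivWithinAt.mul (hMderiv n hn x hx)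
    have hanti : AntitoneOn g (Set.Icc 0 T) := by
      refine antitoneOn_of_hasDerivWithinAt_nonpos (convex_Icc 0 T)
        (fun x hx => ((hgderiv x hx).continuousWithinAt))
        (f' := fun x => Real.exp (-C * x) * (-C) * Mn n x + Real.exp (-C * x) *
            ∑ i ∈ Finset.Icc 1 n, (i:ℝ) ^ q * truncRHS a p N n i (fun j => wtr n j x))
        (fun x hx => ((hgderiv x (interior_subset hx)).mono interior_subset)) ?_
      intro x hx
      rw [interior_Icc] at hx
      have hxI : x ∈ Set.Icc (0:ℝ) T := Set.Ioo_subset_Icc_self hx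
      have h1 := hDle n hn x hxI
      have h2 : Real.exp (-C * x) *
            (∑ i ∈ Finset.Icc 1 n, (i:ℝ) ^ q * truncRHS a p N n i (fun j => wtr n j x))
          ≤ Real.exp (-C * x) * (C * Mn n x) :=
        mul_le_mul_of_nonneg_left h1 (Real.exp_nonneg _)
      nlinarith [h2]
    have h0T : (0:ℝ) ∈ Set.Icc (0:ℝ) T := ⟨le_refl 0, hT.le⟩
    have hgle : g s ≤ g 0 := hanti h0T hs hs.1
    have hg0 : g 0 = Mn n 0 := by simp [hg]
    have hprod : Real.exp (C * s) * Real.exp (-C * s) = 1 := by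
      rw [← Real.exp_add]
      norm_num
    calc Mn n s = (Real.exp (C * s) * Real.exp (-C * s)) * Mn n s := by
          rw [hprod, one_mul]
      _ = Real.exp (C * s) * (Real.exp (-C * s) * Mn n s) := by ring
      _ ≤ Real.exp (C * s) * Mn n 0 := by
          refine mul_le_mul_of_nonneg_left ?_ (Real.exp_nonneg _)
          rw [← hg0]; exact hgle
  -- initial moment bounded
  have hM0 : ∀ n : ℕ, 2 ≤ n → Mn n 0 ≤ Q0 := by
    intro n hn
    have e1 : Mn n 0 = ∑ i ∈ Finset.Icc 1 n, (i:ℝ) ^ q * w0 i := by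
      simp only [hMn]
      exact Finset.sum_congr rfl fun i hi => by rw [hwtr_init n hn i hi]
    rw [e1, hQ0]
    refine Summable.sum_le_tsum _ (fun i hi => ?_) hw0_momq
    rcases Nat.eq_zero_or_pos i with h0 | h1
    · simp [h0, Real.zero_rpow hq0]
    · have : 0 ≤ w0 i := hw0_nonneg i h1
      positivity
  -- pass to the limit
  intro t ht
  have hB : ∀ J : ℕ, ∑ i ∈ Finset.Icc 1 J, (i:ℝ) ^ q * w i t ≤ Real.exp (C * t) * Q0 := by
    intro J
    have htend : Filter.Tendsto (fun n => ∑ i ∈ Finset.Icc 1 J, (i:ℝ) ^ q * wtr n i t)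
        Filter.atTop (nhds (∑ i ∈ Finset.Icc 1 J, (i:ℝ) ^ q * w i t)) := by
      refine tendsto_finset_sum _ fun i hi => ?_
      exact (hw_lim i (Finset.mem_Icc.1 hi).1 t ht).const_mul _
    refine le_of_tendsto htend ?_
    filter_upwards [Filter.eventually_ge_atTop (max 2 J)] with n hn
    have hn2 : 2 ≤ n := le_trans (le_max_left _ _) hn
    have hJn : J ≤ n := le_trans (le_max_right _ _) hn
    calc ∑ i ∈ Finset.Icc 1 J, (i:ℝ) ^ q * wtr n i t
        ≤ Mn n t := by
          refine Finset.sum_le_sum_of_subset_of_nonneg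
            (Finset.Icc_subset_Icc_right hJn) fun i hi _ => ?_
          exact mul_nonneg (Real.rpow_nonneg (Nat.cast_nonneg i) q)
            (hwtr_nonneg n hn2 i hi t ht)
      _ ≤ Real.exp (C * t) * Mn n 0 := hkey n hn2 t ht
      _ ≤ Real.exp (C * t) * Q0 :=
          mul_le_mul_of_nonneg_left (hM0 n hn2) (Real.exp_nonneg _)
  have hf0 : ∀ i : ℕ, 0 ≤ (Nat.cast i : ℝ) ^ q * w i t := by
    intro i
    rcases Nat.eq_zero_or_pos i with h0 | h1
    · simp [h0, Real.zero_rpow hq0]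
    · exact mul_nonneg (Real.rpow_nonneg (Nat.cast_nonneg i) q) (hw.2.1 i h1 t ht)
  have hrange : ∀ J : ℕ, ∑ i ∈ Finset.range J, (Nat.cast i : ℝ) ^ q * w i t
      ≤ Real.exp (C * t) * Q0 := by
    intro J
    have e1 : ∑ i ∈ Finset.range J, (Nat.cast i : ℝ) ^ q * w i t
        ≤ ∑ i ∈ Finset.Icc 0 J, (Nat.cast i : ℝ) ^ q * w i t := by
      refine Finset.sum_le_sum_of_subset_of_nonneg ?_ fun i _ _ => hf0 i
      intro i hi
      simp only [Finset.mem_range] at hi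
      simp only [Finset.mem_Icc]
      omega
    have e2 : ∑ i ∈ Finset.Icc 1 J, (Nat.cast i : ℝ) ^ q * w i t
        = ∑ i ∈ Finset.Icc 0 J, (Nat.cast i : ℝ) ^ q * w i t := by
      refine Finset.sum_subset ?_ fun i hi hni => ?_
      · intro i hi; simp only [Finset.mem_Icc] at *; omega
      · have h0 : i = 0 := by
          simp only [Finset.mem_Icc] at hi hni; omega
        simp [h0, Real.zero_rpow hq0]
    calc ∑ i ∈ Finset.range J, (Nat.cast i : ℝ) ^ q * w i t
        ≤ ∑ i ∈ Finset.Icc 0 J, (Nat.cast i : ℝ) ^ q * w i t := e1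
      _ = ∑ i ∈ Finset.Icc 1 J, (Nat.cast i : ℝ) ^ q * w i t := e2.symm
      _ ≤ Real.exp (C * t) * Q0 := hB J
  refine ⟨summable_of_sum_range_le hf0 hrange, ?_⟩
  exact Real.tsum_le_of_sum_range_le hf0 hrange
end
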